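/- arXiv:2206.11469 — 5 statements merged into one kernel-verified Lean document; each statement's English description precedes it below -/
import Mathlib

section
/- Let U be a unitary on A⊗B and σ a density matrix on B. Then U is compatible with σ (i.e., Tr_A[U(ρ⊗σ)U†] = σ for every density matrix ρ on A) if and only if for every finite-dimensional ancilla system R and every density matrix ρ_{RA} on R⊗A whose marginal Tr_R[ρ_{RA}] has full rank, Tr_A[(1_R⊗U)(ρ_{RA}⊗σ)(1_R⊗U)†] = Tr_A[ρ_{RA}] ⊗ σ. -/
open scoped Matrix Kronecker ComplexOrder Classical

noncomputable section

/-- A density matrix: positive semidefinite with unit trace. -/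
def IsDensity {X : Type*} [Fintype X] (ρ : Matrix X X ℂ) : Prop :=
  ρ.PosSemidef ∧ ρ.trace = 1

/-- A pure state: a density matrix that is a rank-one projection. -/
def IsPureState {X : Type*} [Fintype X] (ρ : Matrix X X ℂ) : Prop :=
  IsDensity ρ ∧ ρ * ρ = ρ

/-- A unitary matrix. -/
def IsUnitaryMat {X : Type*} [Fintype X] [DecidableEq X] (U : Matrix X X ℂ) : Prop :=
  U * Uᴴ = 1 ∧ Uᴴ * U = 1

/-- An orthogonal projection. -/
def IsProjection {X : Type*} [Fintype X] (P : Matrix X X ℂ) : Prop :=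
  P.IsHermitian ∧ P * P = P

/-- Partial trace over the first tensor factor. -/
def ptraceL {A B : Type*} [Fintype A] (M : Matrix (A × B) (A × B) ℂ) : Matrix B B ℂ :=
  Matrix.of fun b b' => ∑ a, M (a, b) (a, b')

/-- Partial trace over the second tensor factor. -/
def ptraceR {A B : Type*} [Fintype B] (M : Matrix (A × B) (A × B) ℂ) : Matrix A A ℂ :=
  Matrix.of fun a a' => ∑ b, M (a, b) (a', b)

/-- Partial trace over the middle factor of `(R ⊗ A) ⊗ B`. -/
def ptraceMid {R A B : Type*} [Fintype A] (M : Matrix ((R × A) × B) ((R × A) × B) ℂ) :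
    Matrix (R × B) (R × B) ℂ :=
  Matrix.of fun p q => ∑ a, M ((p.1, a), p.2) ((q.1, a), q.2)

/-- Partial trace over the first factor of `(R ⊗ A) ⊗ B`. -/
def ptraceFst3 {R A B : Type*} [Fintype R] (M : Matrix ((R × A) × B) ((R × A) × B) ℂ) :
    Matrix (A × B) (A × B) ℂ :=
  Matrix.of fun p q => ∑ r, M ((r, p.1), p.2) ((r, q.1), q.2)

/-- `U` on `A ⊗ B` is compatible with `σ` on `B`:
`Tr_A[U (ρ ⊗ σ) U†] = σ` for every density matrix `ρ` on `A`. -/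
def Compatible {A B : Type*} [Fintype A] [Fintype B] [DecidableEq A] [DecidableEq B]
    (U : Matrix (A × B) (A × B) ℂ) (σ : Matrix B B ℂ) : Prop :=
  ∀ ρ : Matrix A A ℂ, IsDensity ρ → ptraceL (U * (ρ ⊗ₖ σ) * Uᴴ) = σ

/-- `1_R ⊗ U` acting on `(R ⊗ A) ⊗ B`. -/
def oneTensor {R A B : Type*} [DecidableEq R] (U : Matrix (A × B) (A × B) ℂ) :
    Matrix ((R × A) × B) ((R × A) × B) ℂ :=
  Matrix.of fun p q => (if p.1.1 = q.1.1 then (1 : ℂ) else 0) * U (p.1.2, p.2) (q.1.2, q.2)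

/-- Partial transpose on the second tensor factor. -/
def ptransposeSnd {A B : Type*} (U : Matrix (A × B) (A × B) ℂ) : Matrix (A × B) (A × B) ℂ :=
  Matrix.of fun p q => U (p.1, q.2) (q.1, p.2)

/-- Eigenvalues of a matrix (junk value `0` when not Hermitian). -/
def eigsOf {X : Type*} [Fintype X] [DecidableEq X] (ρ : Matrix X X ℂ) : X → ℝ :=
  if h : ρ.IsHermitian then h.eigenvalues else 0

/-- Von Neumann entropy (base-2). -/
def vN {X : Type*} [Fintype X] [DecidableEq X] (ρ : Matrix X X ℂ) : ℝ :=
  -∑ i, eigsOf ρ i * Real.logb 2 (eigsOf ρ i)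

/-- Ky Fan partial sum: sum of the `k` largest values of `v` (with multiplicity). -/
def kySum {X : Type*} [Fintype X] (v : X → ℝ) (k : ℕ) : ℝ :=
  ⨆ s : {s : Finset X // s.card ≤ k}, ∑ i ∈ s.1, v i

/-- `v` majorizes `w` (Ky Fan characterization, padding with zeros). -/
def Majorizes {X Y : Type*} [Fintype X] [Fintype Y] (v : X → ℝ) (w : Y → ℝ) : Prop :=
  ∀ k : ℕ, kySum w k ≤ kySum v k

/-- Rényi entropy of order `α ≥ 0` of a probability vector (base 2). -/
def renyi {X : Type*} [Fintype X] (v : X → ℝ) (α : ℝ) : ℝ :=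
  if α = 0 then Real.logb 2 ((Finset.univ.filter (fun i => v i ≠ 0)).card : ℝ)
  else if α = 1 then -∑ i, v i * Real.logb 2 (v i)
  else (1 / (1 - α)) * Real.logb 2 (∑ i, v i ^ α)

/-- A completely positive trace-preserving map, via a Kraus representation. -/
def IsCPTP {X Y : Type*} [Fintype X] [Fintype Y] [DecidableEq X]
    (N : Matrix X X ℂ →ₗ[ℂ] Matrix Y Y ℂ) : Prop :=
  ∃ (m : ℕ) (K : Fin m → Matrix Y X ℂ),
    (∀ M, N M = ∑ j, K j * M * (K j)ᴴ) ∧ (∑ j, (K j)ᴴ * K j = 1)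

/-- `N ⊗ id_B` for a linear map `N` on the first tensor factor. -/
def extendFst {A A' B : Type*} (N : Matrix A A ℂ →ₗ[ℂ] Matrix A' A' ℂ)
    (M : Matrix (A × B) (A × B) ℂ) : Matrix (A' × B) (A' × B) ℂ :=
  Matrix.of fun p q => N (Matrix.of fun a a' => M (a, p.2) (a', q.2)) p.1 q.1

/-- `id_R ⊗ L ⊗ id_B` for a linear map `L` on the middle factor. -/
def extendMid {R A B : Type*} (L : Matrix A A ℂ →ₗ[ℂ] Matrix A A ℂ)
    (M : Matrix ((R × A) × B) ((R × A) × B) ℂ) : Matrix ((R × A) × B) ((R × A) × B) ℂ :=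
  Matrix.of fun p q =>
    L (Matrix.of fun a a' => M ((p.1.1, a), p.2) ((q.1.1, a'), q.2)) p.1.2 q.1.2

/-- `U0 ⊗ U1` acting on `(A0 ⊗ A1) ⊗ (B0 ⊗ B1)`, with `U0` on `A0,B0` and `U1` on `A1,B1`. -/
def delocW {A0 B0 A1 B1 : Type*} (U0 : Matrix (A0 × B0) (A0 × B0) ℂ)
    (U1 : Matrix (A1 × B1) (A1 × B1) ℂ) :
    Matrix ((A0 × A1) × (B0 × B1)) ((A0 × A1) × (B0 × B1)) ℂ :=
  Matrix.of fun p q =>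
    U0 (p.1.1, p.2.1) (q.1.1, q.2.1) * U1 (p.1.2, p.2.2) (q.1.2, q.2.2)

/-- The pair `(U0, U1)` is compatible with `σ` on `B0 ⊗ B1` as a delocalized catalyst. -/
def DelocCompatible {A0 B0 A1 B1 : Type*} [Fintype A0] [Fintype A1] [Fintype B0] [Fintype B1]
    (U0 : Matrix (A0 × B0) (A0 × B0) ℂ) (U1 : Matrix (A1 × B1) (A1 × B1) ℂ)
    (σ : Matrix (B0 × B1) (B0 × B1) ℂ) : Prop :=
  ∀ ρ : Matrix (A0 × A1) (A0 × A1) ℂ, IsDensity ρ →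
    ptraceL (delocW U0 U1 * (ρ ⊗ₖ σ) * (delocW U0 U1)ᴴ) = σ

/-- `ρ` on `A ⊗ B` is partially classical (PC) on the first factor. -/
def PCFirst {A B : Type*} [Fintype A] [Fintype B] [DecidableEq A] [DecidableEq B]
    (ρ : Matrix (A × B) (A × B) ℂ) : Prop :=
  ∃ (n : ℕ) (P : Fin n → Matrix A A ℂ), 2 ≤ n ∧ (∀ i, P i ≠ 0) ∧
    (∀ i, IsProjection (P i)) ∧ (∀ i j, i ≠ j → P i * P j = 0) ∧ (∑ i, P i = 1) ∧
    ρ = ∑ i, (P i ⊗ₖ (1 : Matrix B B ℂ)) * ρ * (P i ⊗ₖ (1 : Matrix B B ℂ))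

/-- `ρ` on `A ⊗ B` is partially classical (PC) on the second factor. -/
def PCSecond {A B : Type*} [Fintype A] [Fintype B] [DecidableEq A] [DecidableEq B]
    (ρ : Matrix (A × B) (A × B) ℂ) : Prop :=
  ∃ (n : ℕ) (P : Fin n → Matrix B B ℂ), 2 ≤ n ∧ (∀ i, P i ≠ 0) ∧
    (∀ i, IsProjection (P i)) ∧ (∀ i j, i ≠ j → P i * P j = 0) ∧ (∑ i, P i = 1) ∧
    ρ = ∑ i, ((1 : Matrix A A ℂ) ⊗ₖ P i) * ρ * ((1 : Matrix A A ℂ) ⊗ₖ P i)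

/-- `U_{A'B} ⊗ 1_A` acting on `A' ⊗ (A ⊗ B)` where `A'` is a copy of `A`. -/
def copyW {A B : Type*} [DecidableEq A] (U : Matrix (A × B) (A × B) ℂ) :
    Matrix (A × (A × B)) (A × (A × B)) ℂ :=
  Matrix.of fun p q =>
    U (p.1, p.2.2) (q.1, q.2.2) * (if p.2.1 = q.2.1 then (1 : ℂ) else 0)

/-- `U` on `A ⊗ B` is compatible with the bipartite state `σ` on `B` up to local unitary. -/
def CompatOnSndUpToLU {A B : Type*} [Fintype A] [Fintype B] [DecidableEq A] [DecidableEq B]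
    (U : Matrix (A × B) (A × B) ℂ) (σ : Matrix (A × B) (A × B) ℂ) : Prop :=
  ∃ V : Matrix B B ℂ, IsUnitaryMat V ∧
    ∀ ρ' : Matrix A A ℂ, IsDensity ρ' →
      ptraceL (copyW U * (ρ' ⊗ₖ σ) * (copyW U)ᴴ)
        = ((1 : Matrix A A ℂ) ⊗ₖ V) * σ * ((1 : Matrix A A ℂ) ⊗ₖ V)ᴴ

/-- The maximally entangled state `φ⁺` on `B ⊗ B`. -/
def maxEnt (B : Type*) [Fintype B] [DecidableEq B] : Matrix (B × B) (B × B) ℂ :=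
  Matrix.of fun p q =>
    (if p.1 = p.2 then (1 : ℂ) else 0) * (if q.1 = q.2 then (1 : ℂ) else 0) /
      (Fintype.card B : ℂ)

/-- Choi matrix of a linear map on `B`. -/
def choi {B : Type*} [Fintype B] [DecidableEq B]
    (R : Matrix B B ℂ →ₗ[ℂ] Matrix B B ℂ) : Matrix (B × B) (B × B) ℂ :=
  extendFst R (maxEnt B)

/-- `U1 ⊗ U0ᵀ` acting on `(A ⊗ A') ⊗ (B ⊗ B')`, `U1` on `A,B`, `U0ᵀ` on `A',B'`. -/
def dynW {A B : Type*} (U0 U1 : Matrix (A × B) (A × B) ℂ) :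
    Matrix ((A × A) × (B × B)) ((A × A) × (B × B)) ℂ :=
  Matrix.of fun p q =>
    U1 (p.1.1, p.2.1) (q.1.1, q.2.1) * U0ᵀ (p.1.2, p.2.2) (q.1.2, q.2.2)

/-- Compatibility of the superunitary `(U0, U1)` with a Choi matrix `J`. -/
def ChoiCompat {A B : Type*} [Fintype A] [Fintype B]
    (U0 U1 : Matrix (A × B) (A × B) ℂ) (J : Matrix (B × B) (B × B) ℂ) : Prop :=
  ∀ ρ : Matrix (A × A) (A × A) ℂ, IsDensity ρ →
    ptraceL (dynW U0 U1 * (ρ ⊗ₖ J) * (dynW U0 U1)ᴴ) = J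

/-- `Pr`, with type sets `I`, `II`, is the essential decomposition of the
first factor `A` for `ρ` on `A ⊗ B`. -/
def EssDecompFst {A B : Type*} [Fintype A] [Fintype B] [DecidableEq A] [DecidableEq B]
    (ρ : Matrix (A × B) (A × B) ℂ) {n : ℕ} (Pr : Fin n → Matrix A A ℂ)
    (I II : Finset (Fin n)) : Prop :=
  (∀ i, IsProjection (Pr i)) ∧ (∀ i j, i ≠ j → Pr i * Pr j = 0) ∧ (∑ i, Pr i = 1) ∧
  (∀ i, Pr i ≠ 0) ∧ Disjoint I II ∧ I ∪ II = Finset.univ ∧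
  (∀ i, Commute (Pr i ⊗ₖ (1 : Matrix B B ℂ)) ρ) ∧
  (∀ i ∈ I, ∀ P : Matrix A A ℂ, IsProjection P → P * Pr i = P → Pr i * P = P →
      Commute (P ⊗ₖ (1 : Matrix B B ℂ))
        ((Pr i ⊗ₖ (1 : Matrix B B ℂ)) * ρ * (Pr i ⊗ₖ (1 : Matrix B B ℂ))) →
      P = 0 ∨ P = Pr i) ∧
  (∀ i ∈ II, ∃ (r : ℕ) (σi : Matrix B B ℂ), 0 < r ∧ (Pr i).trace = (r : ℂ) ∧
      IsDensity σi ∧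
      (Pr i ⊗ₖ (1 : Matrix B B ℂ)) * ρ * (Pr i ⊗ₖ (1 : Matrix B B ℂ))
        = (((Pr i ⊗ₖ (1 : Matrix B B ℂ)) * ρ).trace / (r : ℂ)) • (Pr i ⊗ₖ σi)) ∧
  (∀ P : Matrix A A ℂ, IsProjection P → (∃ i, ¬ Commute P (Pr i)) →
      ¬ Commute (P ⊗ₖ (1 : Matrix B B ℂ)) ρ)

/-- `Pr`, with type sets `I`, `II`, is the essential decomposition of the
second factor `B` for `ρ` on `A ⊗ B`. -/
def EssDecompSnd {A B : Type*} [Fintype A] [Fintype B] [DecidableEq A] [DecidableEq B]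
    (ρ : Matrix (A × B) (A × B) ℂ) {n : ℕ} (Pr : Fin n → Matrix B B ℂ)
    (I II : Finset (Fin n)) : Prop :=
  (∀ i, IsProjection (Pr i)) ∧ (∀ i j, i ≠ j → Pr i * Pr j = 0) ∧ (∑ i, Pr i = 1) ∧
  (∀ i, Pr i ≠ 0) ∧ Disjoint I II ∧ I ∪ II = Finset.univ ∧
  (∀ i, Commute ((1 : Matrix A A ℂ) ⊗ₖ Pr i) ρ) ∧
  (∀ i ∈ I, ∀ P : Matrix B B ℂ, IsProjection P → P * Pr i = P → Pr i * P = P →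
      Commute ((1 : Matrix A A ℂ) ⊗ₖ P)
        (((1 : Matrix A A ℂ) ⊗ₖ Pr i) * ρ * ((1 : Matrix A A ℂ) ⊗ₖ Pr i)) →
      P = 0 ∨ P = Pr i) ∧
  (∀ i ∈ II, ∃ (r : ℕ) (σi : Matrix A A ℂ), 0 < r ∧ (Pr i).trace = (r : ℂ) ∧
      IsDensity σi ∧
      ((1 : Matrix A A ℂ) ⊗ₖ Pr i) * ρ * ((1 : Matrix A A ℂ) ⊗ₖ Pr i)
        = ((((1 : Matrix A A ℂ) ⊗ₖ Pr i) * ρ).trace / (r : ℂ)) • (σi ⊗ₖ Pr i)) ∧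
  (∀ P : Matrix B B ℂ, IsProjection P → (∃ i, ¬ Commute P (Pr i)) →
      ¬ Commute ((1 : Matrix A A ℂ) ⊗ₖ P) ρ)

/-- `(Tr_B ∘ L) ⊗ id_D` applied to an operator on `A ⊗ D`. -/
def trFstApply {A B D : Type*} [Fintype B] (L : Matrix A A ℂ →ₗ[ℂ] Matrix B B ℂ)
    (M : Matrix (A × D) (A × D) ℂ) : Matrix D D ℂ :=
  Matrix.of fun d d' => (L (Matrix.of fun a a' => M (a, d) (a', d'))).trace

/-- The spectrum of the randomness-exhausting output `d(σ)`. -/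
def reoVec {n : ℕ} (lam : Fin n → ℝ) (r : Fin n → ℕ) :
    (Σ i : Fin n, Fin (r i * r i)) → ℝ :=
  fun x => lam x.1 / (r x.1 : ℝ)

/-- The spectrum of the delocalized randomness-exhausting output. -/
def dreoVec {n0 n1 : ℕ} (p : Fin n0 → Fin n1 → ℝ) (t0 : Fin n0 → ℕ) (t1 : Fin n1 → ℕ) :
    (Σ i : Fin n0, Σ j : Fin n1, Fin (t0 i) × Fin (t1 j)) → ℝ :=
  fun x => p x.1 x.2.1 / ((t0 x.1 : ℝ) * (t1 x.2.1 : ℝ))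

end


noncomputable section AuxStmt1

open Matrix

lemma aux_psd_smul {X : Type*} [Fintype X] {M : Matrix X X ℂ} (hM : M.PosSemidef)
    {c : ℝ} (hc : 0 ≤ c) : ((c : ℂ) • M).PosSemidef := by
  refine Matrix.posSemidef_iff_dotProduct_mulVec.mpr ⟨?_, fun x => ?_⟩
  · unfold Matrix.IsHermitian
    rw [Matrix.conjTranspose_smul, hM.1]
    simp [Complex.star_def, Complex.conj_ofReal]
  · rw [Matrix.smul_mulVec, dotProduct_smul, smul_eq_mul]
    exact mul_nonneg (by exact_mod_cast hc) (hM.dotProduct_mulVec_nonneg x)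

lemma aux_psd_vecMulVec {X : Type*} [Fintype X] (v : X → ℂ) :
    (Matrix.vecMulVec v (star v)).PosSemidef := by
  refine Matrix.posSemidef_iff_dotProduct_mulVec.mpr ⟨?_, fun x => ?_⟩
  · ext i j
    simp [Matrix.conjTranspose_apply, Matrix.vecMulVec_apply, mul_comm]
  · have h1 : (Matrix.vecMulVec v (star v)) *ᵥ x = (fun i => v i * (star v ⬝ᵥ x)) := by
      funext i
      simp [Matrix.mulVec, Matrix.vecMulVec_apply, dotProduct, Finset.mul_sum, mul_assoc]
    rw [h1]
    have h2 : dotProduct (star x) (fun i => v i * (star v ⬝ᵥ x))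
        = star (star v ⬝ᵥ x) * (star v ⬝ᵥ x) := by
      simp only [dotProduct, star_sum, Pi.star_apply, star_mul', star_star,
        Finset.sum_mul, Finset.mul_sum]
      rw [Finset.sum_comm]
      refine Finset.sum_congr rfl fun i _ => Finset.sum_congr rfl fun j _ => by ring
    rw [h2]
    exact star_mul_self_nonneg _

lemma aux_posdef_smul_one {X : Type*} [Fintype X] [DecidableEq X] {c : ℝ} (hc : 0 < c) :
    ((c : ℂ) • (1 : Matrix X X ℂ)).PosDef := by
  have h1 : ((c : ℂ) • (1 : Matrix X X ℂ)) = Matrix.diagonal (fun _ => (c : ℂ)) := by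
    ext i j
    by_cases h : i = j <;> simp [Matrix.one_apply, h]
  rw [h1]
  rw [Matrix.posDef_diagonal_iff]
  intro i
  simpa using hc

/-- The channel `ρ ↦ Tr_A[U (ρ ⊗ σ) U†]` as a linear map. -/
def Lchan {A B : Type} [Fintype A] [DecidableEq A] [Fintype B] [DecidableEq B]
    (U : Matrix (A × B) (A × B) ℂ) (σ : Matrix B B ℂ) :
    Matrix A A ℂ →ₗ[ℂ] Matrix B B ℂ where
  toFun ρ := ptraceL (U * (ρ ⊗ₖ σ) * Uᴴ)
  map_add' ρ₁ ρ₂ := by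
    ext b b'
    simp only [ptraceL, Matrix.add_kronecker, Matrix.mul_add, Matrix.add_mul, Matrix.of_apply,
      Matrix.add_apply, Finset.sum_add_distrib]
  map_smul' c ρ := by
    ext b b'
    simp only [ptraceL, Matrix.smul_kronecker, Matrix.mul_smul, Matrix.smul_mul, Matrix.of_apply,
      Matrix.smul_apply, RingHom.id_apply, Finset.smul_sum]

lemma Lchan_apply {A B : Type} [Fintype A] [DecidableEq A] [Fintype B] [DecidableEq B]
    (U : Matrix (A × B) (A × B) ℂ) (σ : Matrix B B ℂ) (ρ : Matrix A A ℂ) :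
    Lchan U σ ρ = ptraceL (U * (ρ ⊗ₖ σ) * Uᴴ) := rfl

lemma Lchan_density {A B : Type} [Fintype A] [DecidableEq A] [Fintype B] [DecidableEq B]
    {U : Matrix (A × B) (A × B) ℂ} {σ : Matrix B B ℂ} (h : Compatible U σ)
    {ρ : Matrix A A ℂ} (hρ : IsDensity ρ) : Lchan U σ ρ = σ := h ρ hρ

lemma trace_vecMulVec' {X : Type*} [Fintype X] (v : X → ℂ) :
    (Matrix.vecMulVec v (star v)).trace = ∑ i, v i * star (v i) := by
  simp [Matrix.trace, Matrix.diag, Matrix.vecMulVec_apply]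

lemma Lchan_vmv {A B : Type} [Fintype A] [DecidableEq A] [Fintype B] [DecidableEq B]
    {U : Matrix (A × B) (A × B) ℂ} {σ : Matrix B B ℂ} (h : Compatible U σ)
    (v : A → ℂ) (htr : (∑ i, v i * star (v i)) = 2) :
    Lchan U σ (Matrix.vecMulVec v (star v)) = (2 : ℂ) • σ := by
  have hd : IsDensity ((2 : ℂ)⁻¹ • Matrix.vecMulVec v (star v)) := by
    constructor
    · have := aux_psd_smul (aux_psd_vecMulVec v) (c := (2 : ℝ)⁻¹) (by norm_num)
      have hc : (((2 : ℝ)⁻¹ : ℝ) : ℂ) = (2 : ℂ)⁻¹ := by push_cast; ring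
      rwa [hc] at this
    · rw [Matrix.trace_smul, trace_vecMulVec', htr]
      simp
  have := h _ hd
  rw [← Lchan_apply, _root_.map_smul] at this
  have h2 : (2 : ℂ) • ((2 : ℂ)⁻¹ • Lchan U σ (Matrix.vecMulVec v (star v))) = (2 : ℂ) • σ := by
    rw [this]
  rwa [smul_smul, mul_inv_cancel₀ (by norm_num : (2:ℂ) ≠ 0), one_smul] at h2

set_option maxHeartbeats 1600000 in
lemma Lchan_std {A B : Type} [Fintype A] [DecidableEq A] [Fintype B] [DecidableEq B]
    {U : Matrix (A × B) (A × B) ℂ} {σ : Matrix B B ℂ} (h : Compatible U σ)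
    (a a' : A) :
    Lchan U σ (Matrix.single a a' 1) = (if a = a' then (1 : ℂ) else 0) • σ := by
  have hstd : ∀ (x y i j : A), Matrix.single x y (1:ℂ) i j
      = if x = i ∧ y = j then 1 else 0 := fun _ _ _ _ => rfl
  have hdiag : ∀ x : A, Lchan U σ (Matrix.single x x 1) = σ := by
    intro x
    have hv : Matrix.single x x (1 : ℂ)
        = Matrix.vecMulVec (Pi.single x 1) (star (Pi.single x 1)) := by
      ext i j
      rw [hstd, Matrix.vecMulVec_apply]
      by_cases hi : x = i <;> by_cases hj : x = j <;>
        simp [Pi.single_apply, hi, hj, eq_comm]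
    rw [hv]
    refine h _ ⟨aux_psd_vecMulVec _, ?_⟩
    rw [trace_vecMulVec']
    simp [Pi.single_apply]
  by_cases hq : a = a'
  · subst hq
    simp [hdiag a]
  · have hq' : a' ≠ a := Ne.symm hq
    set w : A → ℂ := fun i => (Pi.single a (1 : ℂ) : A → ℂ) i + (Pi.single a' (1 : ℂ) : A → ℂ) i with hw
    set u : A → ℂ := fun i => (Pi.single a (1 : ℂ) : A → ℂ) i + Complex.I * (Pi.single a' (1 : ℂ) : A → ℂ) i with hu
    have hwa : w a = 1 := by simp [hw, Pi.single_apply, hq, hq']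
    have hwa' : w a' = 1 := by simp [hw, Pi.single_apply, hq, hq']
    have hw0 : ∀ i, i ≠ a → i ≠ a' → w i = 0 := by
      intro i h1 h2; simp [hw, Pi.single_apply, h1, h2]
    have hua : u a = 1 := by simp [hu, Pi.single_apply, hq, hq']
    have hua' : u a' = Complex.I := by simp [hu, Pi.single_apply, hq, hq']
    have hu0 : ∀ i, i ≠ a → i ≠ a' → u i = 0 := by
      intro i h1 h2; simp [hu, Pi.single_apply, h1, h2]
    have hdecomp : Matrix.single a a' (1 : ℂ)
        = (2 : ℂ)⁻¹ • (Matrix.vecMulVec w (star w) + Complex.I • Matrix.vecMulVec u (star u)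
            - (1 + Complex.I) • (Matrix.single a a 1 + Matrix.single a' a' 1)) := by
      ext i j
      simp only [Matrix.smul_apply, Matrix.sub_apply, Matrix.add_apply, Matrix.vecMulVec_apply,
        Pi.star_apply, smul_eq_mul, hstd]
      by_cases hi : i = a
      · by_cases hj : j = a
        · rw [hi, hj, hwa, hua, if_neg (fun hc => hq' hc.2), if_pos ⟨rfl, rfl⟩,
            if_neg (fun hc : a' = a ∧ a' = a => hq' hc.1)]
          simp only [Complex.star_def, Complex.conj_I, _root_.map_one]
          ring
        · by_cases hj' : j = a'
          · rw [hi, hj', hwa, hwa', hua, hua', if_pos ⟨rfl, rfl⟩,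
              if_neg (fun hc : a = a ∧ a = a' => hq hc.2),
              if_neg (fun hc : a' = a ∧ a' = a' => hq' hc.1)]
            simp only [Complex.star_def, Complex.conj_I, _root_.map_one]
            linear_combination (2⁻¹ : ℂ) * Complex.I_sq
          · have hja : a ≠ j := fun hc => hj hc.symm
            have hja' : a' ≠ j := fun hc => hj' hc.symm
            rw [hi, hwa, hua, hw0 j hj hj', hu0 j hj hj',
              if_neg (fun hc : a = a ∧ a' = j => hja' hc.2),
              if_neg (fun hc : a = a ∧ a = j => hja hc.2),
              if_neg (fun hc : a' = a ∧ a' = j => hq' hc.1)]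
            simp
      · by_cases hi' : i = a'
        · by_cases hj : j = a
          · rw [hi', hj, hwa, hwa', hua, hua',
              if_neg (fun hc : a = a' ∧ a' = a => hq hc.1),
              if_neg (fun hc : a = a' ∧ a = a => hq hc.1),
              if_neg (fun hc : a' = a' ∧ a' = a => hq' hc.2)]
            simp only [Complex.star_def, Complex.conj_I, _root_.map_one]
            linear_combination (-(2⁻¹ : ℂ)) * Complex.I_sq
          · by_cases hj' : j = a'
            · rw [hi', hj', hwa', hua',
                if_neg (fun hc : a = a' ∧ a' = a' => hq hc.1),
                if_neg (fun hc : a = a' ∧ a = a' => hq hc.1), if_pos ⟨rfl, rfl⟩]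
              simp only [Complex.star_def, Complex.conj_I, _root_.map_one]
              linear_combination ((2⁻¹ : ℂ) * Complex.I) * Complex.I_sq
            · have hja : a ≠ j := fun hc => hj hc.symm
              have hja' : a' ≠ j := fun hc => hj' hc.symm
              rw [hi', hwa', hua', hw0 j hj hj', hu0 j hj hj',
                if_neg (fun hc : a = a' ∧ a' = j => hq hc.1),
                if_neg (fun hc : a = a' ∧ a = j => hq hc.1),
                if_neg (fun hc : a' = a' ∧ a' = j => hja' hc.2)]
              simp
        · have hia : a ≠ i := fun hc => hi hc.symm
          have hia' : a' ≠ i := fun hc => hi' hc.symm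
          rw [hw0 i hi hi', hu0 i hi hi',
            if_neg (fun hc : a = i ∧ a' = j => hia hc.1),
            if_neg (fun hc : a = i ∧ a = j => hia hc.1),
            if_neg (fun hc : a' = i ∧ a' = j => hia' hc.1)]
          simp
    have hP : Lchan U σ (Matrix.vecMulVec w (star w)) = (2 : ℂ) • σ := by
      refine Lchan_vmv h w ?_
      have hterm : ∀ i, w i * star (w i)
          = (if i = a then (1:ℂ) else 0) + (if i = a' then (1:ℂ) else 0) := by
        intro i
        by_cases hi : i = a
        · rw [hi, hwa, if_pos rfl, if_neg hq]
          simp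
        · by_cases hi' : i = a'
          · rw [hi', hwa', if_neg hq', if_pos rfl]
            simp
          · rw [hw0 i hi hi', if_neg hi, if_neg hi']
            simp
      simp only [hterm, Finset.sum_add_distrib, Finset.sum_ite_eq', Finset.mem_univ, if_true]
      norm_num
    have hQ : Lchan U σ (Matrix.vecMulVec u (star u)) = (2 : ℂ) • σ := by
      refine Lchan_vmv h u ?_
      have hterm : ∀ i, u i * star (u i)
          = (if i = a then (1:ℂ) else 0) + (if i = a' then (1:ℂ) else 0) := by
        intro i
        by_cases hi : i = a
        · rw [hi, hua, if_pos rfl, if_neg hq]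
          simp
        · by_cases hi' : i = a'
          · rw [hi', hua', if_neg hq', if_pos rfl]
            simp only [Complex.star_def, Complex.conj_I, _root_.map_one]
            linear_combination -Complex.I_sq
          · rw [hu0 i hi hi', if_neg hi, if_neg hi']
            simp
      simp only [hterm, Finset.sum_add_distrib, Finset.sum_ite_eq', Finset.mem_univ, if_true]
      norm_num
    rw [hdecomp, _root_.map_smul, map_sub, map_add, _root_.map_smul, _root_.map_smul, map_add, hP,
      hQ, hdiag a, hdiag a', if_neg hq]
    module

lemma Lchan_trace_smul {A B : Type} [Fintype A] [DecidableEq A] [Fintype B] [DecidableEq B]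
    {U : Matrix (A × B) (A × B) ℂ} {σ : Matrix B B ℂ} (h : Compatible U σ)
    (ρ : Matrix A A ℂ) : Lchan U σ ρ = ρ.trace • σ := by
  conv_lhs => rw [Matrix.matrix_eq_sum_single ρ]
  rw [map_sum]
  have hrow : ∀ i : A, Lchan U σ (∑ j, Matrix.single i j (ρ i j)) = ρ i i • σ := by
    intro i
    rw [map_sum]
    have hone : ∀ j : A, Lchan U σ (Matrix.single i j (ρ i j))
        = ρ i j • ((if i = j then (1:ℂ) else 0) • σ) := by
      intro j
      have : Matrix.single i j (ρ i j) = ρ i j • Matrix.single i j (1 : ℂ) := by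
        simp
      rw [this, _root_.map_smul, Lchan_std h]
    rw [Finset.sum_congr rfl fun j _ => hone j]
    simp [smul_smul, mul_ite, mul_one, mul_zero, ite_smul, zero_smul, Finset.sum_ite_eq]
  rw [Finset.sum_congr rfl fun i _ => hrow i, ← Finset.sum_smul]
  rfl

lemma oneTensor_conj_entry {R A B : Type} [Fintype R] [DecidableEq R] [Fintype A] [DecidableEq A]
    [Fintype B] [DecidableEq B]
    (U : Matrix (A × B) (A × B) ℂ) (σ : Matrix B B ℂ) (M : Matrix (R × A) (R × A) ℂ)
    (r r' : R) (a a' : A) (b b' : B) :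
    (oneTensor (R := R) U * (M ⊗ₖ σ) * (oneTensor (R := R) U)ᴴ) ((r, a), b) ((r', a'), b')
      = (U * ((Matrix.of fun x y => M (r, x) (r', y)) ⊗ₖ σ) * Uᴴ) (a, b) (a', b') := by
  have hleft : ∀ (X : Matrix ((R × A) × B) ((R × A) × B) ℂ) (q),
      (oneTensor (R := R) U * X) ((r, a), b) q
        = ∑ a1 : A, ∑ b1 : B, U (a, b) (a1, b1) * X ((r, a1), b1) q := by
    intro X q
    rw [Matrix.mul_apply]
    rw [Fintype.sum_prod_type]
    simp only [Fintype.sum_prod_type, oneTensor, Matrix.of_apply, ite_mul, one_mul, zero_mul]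
    rw [Finset.sum_comm]
    refine Finset.sum_congr rfl fun a1 _ => ?_
    rw [Finset.sum_comm]
    refine Finset.sum_congr rfl fun b1 _ => ?_
    simp
  have hright : ∀ (X : Matrix ((R × A) × B) ((R × A) × B) ℂ) (p),
      (X * (oneTensor (R := R) U)ᴴ) p ((r', a'), b')
        = ∑ a2 : A, ∑ b2 : B, X p ((r', a2), b2) * star (U (a', b') (a2, b2)) := by
    intro X p
    simp only [Matrix.mul_apply, Matrix.conjTranspose_apply, Fintype.sum_prod_type]
    rw [Finset.sum_eq_single r' ?_ ?_]
    · refine Finset.sum_congr rfl fun a2 _ => Finset.sum_congr rfl fun b2 _ => ?_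
      simp [oneTensor]
    · intro r2 _ hne
      refine Finset.sum_eq_zero fun a2 _ => Finset.sum_eq_zero fun b2 _ => ?_
      simp [oneTensor, Ne.symm hne]
    · intro habs
      exact absurd (Finset.mem_univ r') habs
  rw [hright]
  have hrhs : (U * ((Matrix.of fun x y => M (r, x) (r', y)) ⊗ₖ σ) * Uᴴ) (a, b) (a', b')
      = ∑ a2 : A, ∑ b2 : B, (U * ((Matrix.of fun x y => M (r, x) (r', y)) ⊗ₖ σ)) (a, b) (a2, b2)
          * star (U (a', b') (a2, b2)) := by
    simp only [Matrix.mul_apply, Matrix.conjTranspose_apply, Fintype.sum_prod_type]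
  rw [hrhs]
  refine Finset.sum_congr rfl fun a2 _ => Finset.sum_congr rfl fun b2 _ => ?_
  congr 1
  rw [hleft, Matrix.mul_apply]
  simp only [Fintype.sum_prod_type]
  refine Finset.sum_congr rfl fun a1 _ => Finset.sum_congr rfl fun b1 _ => ?_
  simp [Matrix.kroneckerMap_apply]

end AuxStmt1

/-- `U` is compatible with `σ` iff for every ancilla `R` and every
density matrix `ρ_RA` on `R ⊗ A` whose marginal on `A` has full rank,
`Tr_A[(1_R ⊗ U)(ρ_RA ⊗ σ)(1_R ⊗ U)†] = Tr_A[ρ_RA] ⊗ σ`. -/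
theorem stmt_1 {A B : Type} [Fintype A] [DecidableEq A] [Fintype B] [DecidableEq B]
    (U : Matrix (A × B) (A × B) ℂ) (hU : IsUnitaryMat U)
    (σ : Matrix B B ℂ) (hσ : IsDensity σ) :
    Compatible U σ ↔
      ∀ (R : Type) [Fintype R] [DecidableEq R] (ρRA : Matrix (R × A) (R × A) ℂ),
        IsDensity ρRA → (ptraceL ρRA).rank = Fintype.card A →
        ptraceMid (oneTensor U * (ρRA ⊗ₖ σ) * (oneTensor U)ᴴ) = ptraceR ρRA ⊗ₖ σ := by
  constructor
  · -- forward direction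
    intro h R _ _ ρRA _ _
    ext p q
    obtain ⟨r, b⟩ := p
    obtain ⟨r', b'⟩ := q
    have hslice : ∀ a : A,
        (oneTensor (R := R) U * (ρRA ⊗ₖ σ) * (oneTensor (R := R) U)ᴴ) ((r, a), b) ((r', a), b')
          = (U * ((Matrix.of fun x y => ρRA (r, x) (r', y)) ⊗ₖ σ) * Uᴴ) (a, b) (a, b') :=
      fun a => oneTensor_conj_entry U σ ρRA r r' a a b b'
    have hkey := Lchan_trace_smul h (Matrix.of fun x y => ρRA (r, x) (r', y))
    have hEntry : ptraceL (U * ((Matrix.of fun x y => ρRA (r, x) (r', y)) ⊗ₖ σ) * Uᴴ) b b'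
        = (Matrix.of fun x y => ρRA (r, x) (r', y)).trace * σ b b' := by
      rw [← Lchan_apply, hkey]
      simp
    show (∑ a, (oneTensor (R := R) U * (ρRA ⊗ₖ σ) * (oneTensor (R := R) U)ᴴ)
        ((r, a), b) ((r', a), b')) = _
    calc (∑ a, (oneTensor (R := R) U * (ρRA ⊗ₖ σ) * (oneTensor (R := R) U)ᴴ)
          ((r, a), b) ((r', a), b'))
        = ∑ a, (U * ((Matrix.of fun x y => ρRA (r, x) (r', y)) ⊗ₖ σ) * Uᴴ) (a, b) (a, b') :=
          Finset.sum_congr rfl fun a _ => hslice a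
      _ = ptraceL (U * ((Matrix.of fun x y => ρRA (r, x) (r', y)) ⊗ₖ σ) * Uᴴ) b b' := rfl
      _ = (Matrix.of fun x y => ρRA (r, x) (r', y)).trace * σ b b' := hEntry
      _ = (ptraceR ρRA ⊗ₖ σ) (r, b) (r', b') := by
          simp [ptraceR, Matrix.kroneckerMap_apply, Matrix.trace, Matrix.diag]
  · -- backward direction
    intro h ρ hρ
    have hAne : Nonempty A := by
      by_contra hA
      haveI := not_nonempty_iff.mp hA
      have h0 : ρ.trace = 0 := by simp [Matrix.trace]
      rw [hρ.2] at h0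
      exact one_ne_zero h0
    have hn : 0 < Fintype.card A := Fintype.card_pos
    set n : ℕ := Fintype.card A with hndef
    -- the full-rank states get mapped correctly
    have applyH : ∀ τ : Matrix A A ℂ, τ.PosDef → τ.trace = 1 → Lchan U σ τ = σ := by
      intro τ hpd htr
      set e : Unit × A ≃ A := Equiv.punitProd A with hedef
      set ρRA : Matrix (Unit × A) (Unit × A) ℂ := τ.submatrix e e with hdef
      have hent : ∀ u u' a a', ρRA (u, a) (u', a') = τ a a' := by
        intro u u' a a'
        simp [hdef, hedef, Matrix.submatrix_apply]
      have h1 : IsDensity ρRA := by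
        constructor
        · exact hpd.posSemidef.submatrix e
        · rw [← htr]
          simp only [Matrix.trace, Matrix.diag]
          rw [Fintype.sum_prod_type]
          simp [hent]
      have h2 : ptraceL ρRA = τ := by
        ext a a'
        simp [ptraceL, hent]
      have h3 : (ptraceL ρRA).rank = Fintype.card A := by
        rw [h2]
        exact Matrix.rank_of_isUnit τ hpd.isUnit
      have h4 := h Unit ρRA h1 h3
      have hR : ptraceR ρRA = Matrix.of fun _ _ : Unit => (1 : ℂ) := by
        ext u u'
        have : (∑ a, ρRA (u, a) (u', a)) = τ.trace := by
          simp [hent, Matrix.trace, Matrix.diag]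
        simp only [ptraceR, Matrix.of_apply]
        rw [this, htr]
      ext b b'
      have h5 : ptraceMid (oneTensor (R := Unit) U * (ρRA ⊗ₖ σ) * (oneTensor (R := Unit) U)ᴴ)
          ((), b) ((), b') = (ptraceR ρRA ⊗ₖ σ) ((), b) ((), b') := by rw [h4]
      have hslice : (Matrix.of fun x y => ρRA ((), x) ((), y)) = τ := by
        ext a a'
        simp [hent]
      have h6 : ptraceMid (oneTensor (R := Unit) U * (ρRA ⊗ₖ σ) * (oneTensor (R := Unit) U)ᴴ)
          ((), b) ((), b') = Lchan U σ τ b b' := by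
        show (∑ a, (oneTensor (R := Unit) U * (ρRA ⊗ₖ σ) * (oneTensor (R := Unit) U)ᴴ)
            (((), a), b) (((), a), b')) = _
        calc (∑ a, (oneTensor (R := Unit) U * (ρRA ⊗ₖ σ) * (oneTensor (R := Unit) U)ᴴ)
              (((), a), b) (((), a), b'))
            = ∑ a, (U * ((Matrix.of fun x y => ρRA ((), x) ((), y)) ⊗ₖ σ) * Uᴴ) (a, b) (a, b') :=
              Finset.sum_congr rfl fun a _ => oneTensor_conj_entry U σ ρRA () () a a b b'
          _ = ∑ a, (U * (τ ⊗ₖ σ) * Uᴴ) (a, b) (a, b') := by rw [hslice]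
          _ = Lchan U σ τ b b' := rfl
      rw [← h6, h5, hR]
      simp [Matrix.kroneckerMap_apply]
    -- reduce general density matrices to full-rank ones
    set μ : Matrix A A ℂ := ((n : ℂ))⁻¹ • 1 with hμdef
    have hcast : (((n : ℝ)⁻¹ : ℝ) : ℂ) = ((n : ℂ))⁻¹ := by push_cast; ring
    have hμpd : μ.PosDef := by
      rw [hμdef, ← hcast]
      exact aux_posdef_smul_one (by positivity)
    have hμtr : μ.trace = 1 := by
      rw [hμdef, Matrix.trace_smul, Matrix.trace_one]
      simp only [smul_eq_mul]
      rw [← hndef]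
      exact inv_mul_cancel₀ (Nat.cast_ne_zero.mpr hn.ne')
    set ρ' : Matrix A A ℂ := (2 : ℂ)⁻¹ • ρ + (2 : ℂ)⁻¹ • μ with hρ'def
    have hhalf : ((2 : ℂ))⁻¹ = (((2 : ℝ)⁻¹ : ℝ) : ℂ) := by push_cast; ring
    have hρ'pd : ρ'.PosDef := by
      rw [hρ'def]
      refine Matrix.PosDef.posSemidef_add ?_ ?_
      · rw [hhalf]
        exact aux_psd_smul hρ.1 (by norm_num)
      · rw [hμdef, smul_smul]
        have : (2 : ℂ)⁻¹ * ((n : ℂ))⁻¹ = ((((2 * n : ℝ))⁻¹ : ℝ) : ℂ) := by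
          push_cast
          rw [mul_inv]
        rw [this]
        exact aux_posdef_smul_one (by positivity)
    have hρ'tr : ρ'.trace = 1 := by
      rw [hρ'def, Matrix.trace_add, Matrix.trace_smul, Matrix.trace_smul, hρ.2, hμtr]
      simp only [smul_eq_mul, mul_one]
      norm_num
    have e1 := applyH ρ' hρ'pd hρ'tr
    have e2 := applyH μ hμpd hμtr
    have hdecomp : ρ = (2 : ℂ) • ρ' - μ := by
      rw [hρ'def]
      module
    have : Lchan U σ ρ = σ := by
      rw [hdecomp, map_sub, map_smul, e1, e2, two_smul]
      abel
    exact this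
end

section
/- Let U be a bipartite unitary on A⊗B whose partial transpose U^{T_B} is unitary (a catalytic unitary), and let σ be a density matrix on B. Then U is compatible with σ, i.e., Tr_A[U(ρ⊗σ)U†] = σ for every density matrix ρ on A, if and only if [U, 1_A⊗σ] = 0. -/
open scoped Matrix Kronecker ComplexOrder Classical

section Stmt3Aux

variable {A B : Type} [Fintype A] [DecidableEq A] [Fintype B] [DecidableEq B]

lemma stmt3_sum_v1 {x : A} (p : ℂ) (g : A → ℂ) :
    ∑ i, (if i = x then p else 0) * g i = p * g x := by
  simp [ite_mul, zero_mul, Finset.sum_ite_eq', Finset.mem_univ]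

lemma stmt3_sum_v {x y : A} (hxy : x ≠ y) (p q : ℂ) (g : A → ℂ) :
    ∑ i, (if i = x then p else if i = y then q else 0) * g i = p * g x + q * g y := by
  have h : ∀ i, (if i = x then p else if i = y then q else 0) * g i
      = (if i = x then p * g x else 0) + (if i = y then q * g y else 0) := by
    intro i
    split_ifs with h1 h2 <;> simp_all
  simp [h, Finset.sum_add_distrib, Finset.sum_ite_eq', Finset.mem_univ]

lemma stmt3_eval_sum1 (c p : ℂ) (x : A) (Yt : A → A → ℂ) :
    ∑ a1, ∑ a2, (c * ((if a1 = x then p else 0) * star (if a2 = x then p else 0))) * Yt a2 a1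
      = c * (p * (star p * Yt x x)) := by
  have h1 : ∀ a1, ∑ a2, (c * ((if a1 = x then p else 0) * star (if a2 = x then p else 0))) * Yt a2 a1
      = (if a1 = x then p else 0) * (c * ∑ a2, (if a2 = x then star p else 0) * Yt a2 a1) := by
    intro a1
    rw [Finset.mul_sum, Finset.mul_sum]
    refine Finset.sum_congr rfl fun a2 _ => ?_
    split_ifs <;> simp <;> ring
  simp only [h1]
  rw [stmt3_sum_v1, stmt3_sum_v1]
  ring

lemma stmt3_eval_sum2 (c p q : ℂ) {x y : A} (hxy : x ≠ y) (Yt : A → A → ℂ) :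
    ∑ a1, ∑ a2, (c * ((if a1 = x then p else if a1 = y then q else 0)
        * star (if a2 = x then p else if a2 = y then q else 0))) * Yt a2 a1
      = c * (p * (star p * Yt x x + star q * Yt y x)
          + q * (star p * Yt x y + star q * Yt y y)) := by
  have h1 : ∀ a1, ∑ a2, (c * ((if a1 = x then p else if a1 = y then q else 0)
        * star (if a2 = x then p else if a2 = y then q else 0))) * Yt a2 a1
      = (if a1 = x then p else if a1 = y then q else 0)
        * (c * ∑ a2, (if a2 = x then star p else if a2 = y then star q else 0) * Yt a2 a1) := by
    intro a1
    rw [Finset.mul_sum, Finset.mul_sum]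
    refine Finset.sum_congr rfl fun a2 _ => ?_
    split_ifs <;> simp <;> ring
  simp only [h1]
  rw [stmt3_sum_v hxy, stmt3_sum_v hxy, stmt3_sum_v hxy]
  ring

lemma stmt3_sum_ind2 {x y : A} (hxy : x ≠ y) (p q : ℂ) :
    ∑ i, ((if i = x then p else if i = y then q else 0)
        * star (if i = x then p else if i = y then q else 0))
      = p * star p + q * star q := by
  have h : ∀ i, ((if i = x then p else if i = y then q else 0)
        * star (if i = x then p else if i = y then q else 0))
      = (if i = x then p * star p else 0) + (if i = y then q * star q else 0) := by
    intro i
    split_ifs with h1 h2 <;> simp_all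
  simp only [h]
  simp [Finset.sum_add_distrib, Finset.sum_ite_eq', Finset.mem_univ]

lemma stmt3_density_outer (c : ℝ) (hc : 0 ≤ c) (v : A → ℂ)
    (htr : (c:ℂ) * ∑ i, v i * star (v i) = 1) :
    IsDensity ((c:ℂ) • (Matrix.of fun i j => v i * star (v j)) : Matrix A A ℂ) := by
  constructor
  · rw [Matrix.posSemidef_iff_dotProduct_mulVec]
    constructor
    · ext i j
      simp only [Matrix.conjTranspose_apply, Matrix.smul_apply, Matrix.of_apply, smul_eq_mul,
        star_mul', star_star, Complex.star_def, Complex.conj_ofReal, Complex.conj_conj]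
      ring
    · intro xv
      have key : dotProduct (star xv)
            ((((c:ℂ) • (Matrix.of fun i j => v i * star (v j))) : Matrix A A ℂ) *ᵥ xv)
          = (c:ℂ) * (star (∑ j, star (v j) * xv j) * (∑ j, star (v j) * xv j)) := by
        simp only [dotProduct, Matrix.mulVec, Matrix.smul_apply, Matrix.of_apply,
          smul_eq_mul, Pi.star_apply, star_sum, star_mul', star_star, Finset.mul_sum,
          Finset.sum_mul]
        rw [Finset.sum_comm]
        refine Finset.sum_congr rfl fun j _ => Finset.sum_congr rfl fun i _ => ?_
        ring
      rw [key]
      exact mul_nonneg (by exact_mod_cast hc) (star_mul_self_nonneg _)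
  · simp only [Matrix.trace, Matrix.diag, Matrix.smul_apply, Matrix.of_apply, smul_eq_mul,
      ← Finset.mul_sum]
    exact htr

lemma stmt3_master (U : Matrix (A × B) (A × B) ℂ) (ρ : Matrix A A ℂ) (σ : Matrix B B ℂ)
    (b b' : B) :
    ptraceL (U * (ρ ⊗ₖ σ) * Uᴴ) b b'
      = ∑ a1, ∑ a2, ρ a1 a2 *
          ((ptransposeSnd U)ᴴ * (((1 : Matrix A A ℂ)) ⊗ₖ σᵀ) * ptransposeSnd U)
            (a2, b') (a1, b) := by
  simp only [ptraceL, ptransposeSnd, Matrix.of_apply, Matrix.mul_apply,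
    Matrix.conjTranspose_apply, Matrix.kroneckerMap_apply, Matrix.one_apply,
    Matrix.transpose_apply, Fintype.sum_prod_type,
    Finset.mul_sum, Finset.sum_mul, mul_ite, ite_mul, mul_zero, zero_mul, mul_one, one_mul,
    Finset.sum_ite_eq', Finset.mem_univ, if_true]
  conv_rhs => enter [2,x,2,x1,2,x2,2,x3]; rw [Finset.sum_comm]
  simp only [Finset.sum_ite_eq', Finset.mem_univ, if_true]
  conv_lhs => enter [2,x,2,x1]; rw [Finset.sum_comm]
  conv_lhs => enter [2,x]; rw [Finset.sum_comm]
  rw [Finset.sum_comm]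
  conv_lhs => enter [2,x]; rw [Finset.sum_comm]
  conv_lhs => enter [2,x,2,x1,2,x2]; rw [Finset.sum_comm]
  refine Finset.sum_congr rfl fun x _ => Finset.sum_congr rfl fun x1 _ =>
    Finset.sum_congr rfl fun x2 _ => Finset.sum_congr rfl fun x3 _ =>
    Finset.sum_congr rfl fun x4 _ => ?_
  ring

lemma stmt3_pt_mul (U : Matrix (A × B) (A × B) ℂ) (σ : Matrix B B ℂ) :
    ptransposeSnd (U * ((1 : Matrix A A ℂ) ⊗ₖ σ))
      = ((1 : Matrix A A ℂ) ⊗ₖ σᵀ) * ptransposeSnd U := by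
  ext ⟨a, b⟩ ⟨a', b'⟩
  simp only [ptransposeSnd, Matrix.of_apply, Matrix.mul_apply, Matrix.kroneckerMap_apply,
    Matrix.one_apply, Matrix.transpose_apply, Fintype.sum_prod_type, ite_mul, mul_ite,
    mul_zero, zero_mul, one_mul, mul_one]
  rw [Finset.sum_comm]
  conv_rhs => rw [Finset.sum_comm]
  simp only [Finset.sum_ite_eq, Finset.sum_ite_eq', Finset.mem_univ, if_true]
  exact Finset.sum_congr rfl fun y _ => by ring

lemma stmt3_mul_pt (U : Matrix (A × B) (A × B) ℂ) (σ : Matrix B B ℂ) :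
    ptransposeSnd (((1 : Matrix A A ℂ) ⊗ₖ σ) * U)
      = ptransposeSnd U * ((1 : Matrix A A ℂ) ⊗ₖ σᵀ) := by
  ext ⟨a, b⟩ ⟨a', b'⟩
  simp only [ptransposeSnd, Matrix.of_apply, Matrix.mul_apply, Matrix.kroneckerMap_apply,
    Matrix.one_apply, Matrix.transpose_apply, Fintype.sum_prod_type, ite_mul, mul_ite,
    mul_zero, zero_mul, one_mul, mul_one]
  rw [Finset.sum_comm]
  conv_rhs => rw [Finset.sum_comm]
  simp only [Finset.sum_ite_eq, Finset.sum_ite_eq', Finset.mem_univ, if_true]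
  exact Finset.sum_congr rfl fun y _ => by ring

lemma stmt3_pt_inj {M N : Matrix (A × B) (A × B) ℂ}
    (h : ptransposeSnd M = ptransposeSnd N) : M = N := by
  ext ⟨a, b⟩ ⟨a', b'⟩
  have := congrFun (congrFun h (a, b')) (a', b)
  simpa [ptransposeSnd] using this

end Stmt3Aux

/-- a catalytic unitary `U` (one with unitary partial transpose on `B`)
is compatible with a density matrix `σ` on `B` iff `[U, 1_A ⊗ σ] = 0`. -/
theorem stmt_3 {A B : Type} [Fintype A] [DecidableEq A] [Fintype B] [DecidableEq B]
    (U : Matrix (A × B) (A × B) ℂ) (hU : IsUnitaryMat U)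
    (hUTB : IsUnitaryMat (ptransposeSnd U))
    (σ : Matrix B B ℂ) (hσ : IsDensity σ) :
    Compatible U σ ↔
      U * ((1 : Matrix A A ℂ) ⊗ₖ σ) = ((1 : Matrix A A ℂ) ⊗ₖ σ) * U := by
  constructor
  · -- compatibility implies commutation
    intro hC
    have base : ∀ (c' : ℝ) (v : A → ℂ), 0 ≤ c' → ((c':ℂ) * ∑ i, v i * star (v i) = 1) →
        ∀ b b' : B, ∑ a1, ∑ a2, ((c':ℂ) * (v a1 * star (v a2))) *
            (((ptransposeSnd U)ᴴ * ((1 : Matrix A A ℂ) ⊗ₖ σᵀ) * ptransposeSnd U)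
              (a2, b') (a1, b)) = σ b b' := by
      intro c' v hc' htr b b'
      have hd := stmt3_density_outer c' hc' v htr
      have h2 := congrFun (congrFun (hC _ hd) b) b'
      rw [stmt3_master] at h2
      simpa [Matrix.smul_apply, Matrix.of_apply, smul_eq_mul] using h2
    have E1 : ∀ (z : A) (b b' : B),
        ((ptransposeSnd U)ᴴ * ((1 : Matrix A A ℂ) ⊗ₖ σᵀ) * ptransposeSnd U) (z, b') (z, b)
          = σ b b' := by
      intro z b b'
      have h := base 1 (fun i => if i = z then 1 else 0) zero_le_one
        (by simp [apply_ite (star : ℂ → ℂ), Finset.sum_ite_eq', Finset.mem_univ]) b b'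
      rw [stmt3_eval_sum1] at h
      simpa using h
    have hY : (ptransposeSnd U)ᴴ * ((1 : Matrix A A ℂ) ⊗ₖ σᵀ) * ptransposeSnd U
        = (1 : Matrix A A ℂ) ⊗ₖ σᵀ := by
      ext ⟨x, c⟩ ⟨y, d⟩
      rcases eq_or_ne x y with rfl | hxy
      · simpa [Matrix.kroneckerMap_apply, Matrix.one_apply] using E1 x d c
      · have hE2 := base (1/2) (fun i => if i = x then 1 else if i = y then 1 else 0)
          (by norm_num)
          (by rw [stmt3_sum_ind2 hxy]; norm_num) d c
        have hE3 := base (1/2) (fun i => if i = x then 1 else if i = y then Complex.I else 0)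
          (by norm_num)
          (by rw [stmt3_sum_ind2 hxy]; simp [Complex.star_def]; norm_num
              ) d c
        rw [stmt3_eval_sum2 _ _ _ hxy] at hE2 hE3
        have hE1x := E1 x d c
        have hE1y := E1 y d c
        simp only [star_one, Complex.star_def, map_one, one_mul, mul_one] at hE2 hE3
        rw [Complex.conj_I] at hE3
        set Z1 := ((ptransposeSnd U)ᴴ * ((1 : Matrix A A ℂ) ⊗ₖ σᵀ) * ptransposeSnd U)
          (x, c) (y, d) with hZ1
        set Z2 := ((ptransposeSnd U)ᴴ * ((1 : Matrix A A ℂ) ⊗ₖ σᵀ) * ptransposeSnd U)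
          (y, c) (x, d) with hZ2
        set Z3 := ((ptransposeSnd U)ᴴ * ((1 : Matrix A A ℂ) ⊗ₖ σᵀ) * ptransposeSnd U)
          (x, c) (x, d) with hZ3
        set Z4 := ((ptransposeSnd U)ᴴ * ((1 : Matrix A A ℂ) ⊗ₖ σᵀ) * ptransposeSnd U)
          (y, c) (y, d) with hZ4
        push_cast at hE2 hE3
        have hsum : Z1 + Z2 = 0 := by linear_combination 2 * hE2 - hE1x - hE1y
        have hdiffI : Complex.I * (Z1 - Z2) = 0 := by
          linear_combination 2 * hE3 - hE1x - hE1y + Z4 * Complex.I_mul_I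
        have hdiff : Z1 - Z2 = 0 := by
          rcases mul_eq_zero.mp hdiffI with h | h
          · exact absurd h Complex.I_ne_zero
          · exact h
        have : Z1 = 0 := by linear_combination (hsum + hdiff) / 2
        simpa [Matrix.kroneckerMap_apply, Matrix.one_apply, hxy] using this
    have hcomm : ((1 : Matrix A A ℂ) ⊗ₖ σᵀ) * ptransposeSnd U
        = ptransposeSnd U * ((1 : Matrix A A ℂ) ⊗ₖ σᵀ) := by
      have h := congrArg (fun M => ptransposeSnd U * M) hY
      simpa [← Matrix.mul_assoc, hUTB.1, Matrix.one_mul] using h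
    apply stmt3_pt_inj
    rw [stmt3_pt_mul, stmt3_mul_pt]
    exact hcomm
  · -- commutation implies compatibility
    intro hcm ρ hρ
    have hcomm' : ((1 : Matrix A A ℂ) ⊗ₖ σᵀ) * ptransposeSnd U
        = ptransposeSnd U * ((1 : Matrix A A ℂ) ⊗ₖ σᵀ) := by
      have h := congrArg ptransposeSnd hcm
      rwa [stmt3_pt_mul, stmt3_mul_pt] at h
    have hY : (ptransposeSnd U)ᴴ * ((1 : Matrix A A ℂ) ⊗ₖ σᵀ) * ptransposeSnd U
        = (1 : Matrix A A ℂ) ⊗ₖ σᵀ := by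
      rw [Matrix.mul_assoc, hcomm', ← Matrix.mul_assoc, hUTB.2, Matrix.one_mul]
    ext b b'
    rw [stmt3_master, hY]
    have htr : ∑ a1 : A, ρ a1 a1 = 1 := by
      have := hρ.2
      simpa [Matrix.trace, Matrix.diag] using this
    calc ∑ a1, ∑ a2, ρ a1 a2 * ((1 : Matrix A A ℂ) ⊗ₖ σᵀ) (a2, b') (a1, b)
        = ∑ a1, ρ a1 a1 * σ b b' := by
          refine Finset.sum_congr rfl fun a1 _ => ?_
          simp [Matrix.kroneckerMap_apply, Matrix.one_apply, mul_ite, ite_mul, mul_zero,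
            zero_mul, Finset.sum_ite_eq, Finset.sum_ite_eq', Finset.mem_univ, mul_comm,
            mul_assoc, mul_left_comm]
      _ = σ b b' := by rw [← Finset.sum_mul, htr, one_mul]
end

section
/- Let ρ_AB be a bipartite density matrix that is PC-Q with respect to the essential decomposition A = ⊕_i A_i (projectors Π_i onto A_i), with type I index set I and type II index set II. A unital quantum channel N on A satisfies (N⊗id_B)(ρ_AB) = ρ_AB if and only if N admits a Kraus representation N(X) = ∑_j K_j X K_j† in which every Kraus operator is block diagonal of the standard form K_j = ⊕_{i∈I} α_i^{(j)} Π_i ⊕ ⊕_{i∈II} K_i^{(j)}, with complex scalars α_i^{(j)} for i∈I and operators K_i^{(j)} on A_i for i∈II; equivalently, N preserves every subspace A_i and acts as the identity on operators supported on A_i for every i∈I. -/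
open scoped Matrix Kronecker ComplexOrder Classical

noncomputable section Helpers
open Matrix
set_option linter.unusedSectionVars false
set_option maxHeartbeats 1000000

variable {A B : Type} [Fintype A] [DecidableEq A] [Fintype B] [DecidableEq B]

lemma kron_conjTranspose (K : Matrix A A ℂ) (L : Matrix B B ℂ) :
    (K ⊗ₖ L)ᴴ = Kᴴ ⊗ₖ Lᴴ := by
  ext ⟨a,b⟩ ⟨a',b'⟩
  simp [conjTranspose_apply, kroneckerMap_apply, mul_comm]

lemma sum_kron {m : ℕ} (K : Fin m → Matrix A A ℂ) (L : Matrix B B ℂ) :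
    (∑ j, K j) ⊗ₖ L = ∑ j, K j ⊗ₖ L := by
  ext ⟨a,b⟩ ⟨a',b'⟩
  simp [kroneckerMap_apply, Finset.sum_apply, Finset.sum_mul, Matrix.sum_apply]

lemma diag_kron_one (d : A → ℂ) :
    (diagonal d) ⊗ₖ (1 : Matrix B B ℂ) = diagonal (fun p : A × B => d p.1) := by
  ext ⟨a,b⟩ ⟨a',b'⟩
  by_cases h : a = a' <;> by_cases h2 : b = b' <;>
    simp [kroneckerMap_apply, diagonal, one_apply, h, h2, Prod.ext_iff]

/-- block of a bipartite matrix -/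
def blkM (M : Matrix (A × B) (A × B) ℂ) (b b' : B) : Matrix A A ℂ :=
  Matrix.of fun a a' => M (a, b) (a', b')

lemma blk_conj (K L : Matrix A A ℂ) (M : Matrix (A × B) (A × B) ℂ) (b b' : B) :
    blkM ((K ⊗ₖ (1 : Matrix B B ℂ)) * M * (L ⊗ₖ (1 : Matrix B B ℂ))) b b'
      = K * blkM M b b' * L := by
  ext a a'
  simp only [blkM, Matrix.mul_apply, of_apply, kroneckerMap_apply, Fintype.sum_prod_type,
    Matrix.one_apply]
  simp [Finset.mul_sum, Finset.sum_mul, mul_ite, ite_mul]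


lemma extendFst_eq_blk (N : Matrix A A ℂ →ₗ[ℂ] Matrix A A ℂ)
    (M : Matrix (A × B) (A × B) ℂ) (p q : A × B) :
    extendFst N M p q = N (blkM M p.2 q.2) p.1 q.1 := rfl

lemma extendFst_kraus (N : Matrix A A ℂ →ₗ[ℂ] Matrix A A ℂ) {m : ℕ}
    (K : Fin m → Matrix A A ℂ) (hrep : ∀ M, N M = ∑ j, K j * M * (K j)ᴴ)
    (M : Matrix (A × B) (A × B) ℂ) :
    extendFst N M = ∑ j, (K j ⊗ₖ (1 : Matrix B B ℂ)) * M * (K j ⊗ₖ (1 : Matrix B B ℂ))ᴴ := by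
  ext ⟨p1,p2⟩ ⟨q1,q2⟩
  rw [extendFst_eq_blk, hrep]
  rw [Matrix.sum_apply]
  simp only [Matrix.sum_apply]
  congr 1; ext j
  have : (K j ⊗ₖ (1 : Matrix B B ℂ))ᴴ = (K j)ᴴ ⊗ₖ (1 : Matrix B B ℂ) := by
    rw [kron_conjTranspose, conjTranspose_one]
  rw [this]
  have h := blk_conj (K j) ((K j)ᴴ) M p2 q2
  have := congrFun (congrFun (congrArg (fun (X : Matrix A A ℂ) => (X : A → A → ℂ)) h) p1) q1
  exact (this).symm

lemma extendFst_sum {ι : Type*} (s : Finset ι) (N : Matrix A A ℂ →ₗ[ℂ] Matrix A A ℂ)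
    (M : ι → Matrix (A × B) (A × B) ℂ) :
    extendFst N (∑ i ∈ s, M i) = ∑ i ∈ s, extendFst N (M i) := by
  ext ⟨p1,p2⟩ ⟨q1,q2⟩
  have hb : blkM (B := B) (∑ i ∈ s, M i) p2 q2 = ∑ i ∈ s, blkM (M i) p2 q2 := by
    ext a a'; simp [blkM, Matrix.sum_apply]
  simp only [extendFst_eq_blk, Matrix.sum_apply]
  rw [hb, map_sum]
  simp [Matrix.sum_apply]

lemma extendFst_smul (N : Matrix A A ℂ →ₗ[ℂ] Matrix A A ℂ) (c : ℂ)
    (M : Matrix (A × B) (A × B) ℂ) :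
    extendFst N (c • M) = c • extendFst N (M) := by
  ext ⟨p1,p2⟩ ⟨q1,q2⟩
  have hb : blkM (B := B) (c • M) p2 q2 = c • blkM M p2 q2 := by
    ext a a'; simp [blkM]
  simp only [extendFst_eq_blk, Matrix.smul_apply]
  rw [hb, _root_.map_smul]
  simp

lemma extendFst_kron (N : Matrix A A ℂ →ₗ[ℂ] Matrix A A ℂ)
    (X : Matrix A A ℂ) (Y : Matrix B B ℂ) :
    extendFst N (X ⊗ₖ Y) = N X ⊗ₖ Y := by
  ext ⟨p1,p2⟩ ⟨q1,q2⟩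
  have hb : blkM (X ⊗ₖ Y) p2 q2 = Y p2 q2 • X := by
    ext a a'; simp [blkM, kroneckerMap_apply, mul_comm]
  simp only [extendFst_eq_blk, kroneckerMap_apply]
  rw [hb, _root_.map_smul]
  simp [mul_comm]

lemma trace_CCH {X : Type} [Fintype X] (C : Matrix X X ℂ) :
    (C * Cᴴ).trace = ((∑ p, ∑ q, Complex.normSq (C p q) : ℝ) : ℂ) := by
  rw [Matrix.trace]
  push_cast
  simp only [Matrix.diag_apply, Matrix.mul_apply, conjTranspose_apply]
  congr 1; ext p; congr 1; ext q
  simp [Complex.star_def, Complex.mul_conj]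

lemma trace_selfmul_eq_zero {X : Type} [Fintype X]
    {C : Matrix X X ℂ} (h : (C * Cᴴ).trace = 0) : C = 0 := by
  rw [trace_CCH] at h
  have h2 : ∑ p, ∑ q, Complex.normSq (C p q) = 0 := by exact_mod_cast h
  ext p q
  have hnn : ∀ p ∈ Finset.univ, (0:ℝ) ≤ ∑ q, Complex.normSq (C p q) :=
    fun p _ => Finset.sum_nonneg (fun q _ => Complex.normSq_nonneg _)
  have := (Finset.sum_eq_zero_iff_of_nonneg hnn).mp h2 p (Finset.mem_univ p)
  have hnn2 : ∀ q ∈ Finset.univ, (0:ℝ) ≤ Complex.normSq (C p q) :=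
    fun q _ => Complex.normSq_nonneg _
  have := (Finset.sum_eq_zero_iff_of_nonneg hnn2).mp this q (Finset.mem_univ q)
  simpa using Complex.normSq_eq_zero.mp this

lemma commute_of_fixed {X : Type} [Fintype X] [DecidableEq X] {m : ℕ}
    (L : Fin m → Matrix X X ℂ) (ρ : Matrix X X ℂ) (hherm : ρ.IsHermitian)
    (h1 : ∑ j, (L j)ᴴ * L j = 1) (h2 : ∑ j, L j * (L j)ᴴ = 1)
    (hfix : ∑ j, L j * ρ * (L j)ᴴ = ρ) : ∀ j, Commute (L j) ρ := by
  have key : ∑ j, ((L j * ρ - ρ * L j) * (L j * ρ - ρ * L j)ᴴ).trace = 0 := by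
    have expand : ∀ j, (L j * ρ - ρ * L j) * (L j * ρ - ρ * L j)ᴴ
        = L j * (ρ * ρ) * (L j)ᴴ - (L j * ρ * (L j)ᴴ) * ρ
          - ρ * (L j * ρ * (L j)ᴴ) + ρ * (L j * (L j)ᴴ) * ρ := by
      intro j
      have hρ : ρᴴ = ρ := hherm
      simp only [conjTranspose_sub, conjTranspose_mul, hρ]
      noncomm_ring
    simp only [expand, Matrix.trace_add, Matrix.trace_sub, Finset.sum_add_distrib,
      Finset.sum_sub_distrib]
    have e1 : ∑ j, (L j * (ρ * ρ) * (L j)ᴴ).trace = (ρ * ρ).trace := by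
      have : ∀ j, (L j * (ρ * ρ) * (L j)ᴴ).trace = ((ρ * ρ) * ((L j)ᴴ * L j)).trace := by
        intro j
        rw [Matrix.mul_assoc, Matrix.trace_mul_comm, Matrix.mul_assoc]
      simp only [this]
      rw [← Matrix.trace_sum, ← Finset.mul_sum, h1, Matrix.mul_one]
    have e2 : ∑ j, ((L j * ρ * (L j)ᴴ) * ρ).trace = (ρ * ρ).trace := by
      rw [← Matrix.trace_sum, ← Finset.sum_mul, hfix]
    have e3 : ∑ j, (ρ * (L j * ρ * (L j)ᴴ)).trace = (ρ * ρ).trace := by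
      rw [← Matrix.trace_sum, ← Finset.mul_sum, hfix]
    have e4 : ∑ j, (ρ * (L j * (L j)ᴴ) * ρ).trace = (ρ * ρ).trace := by
      have : ∀ j, (ρ * (L j * (L j)ᴴ) * ρ).trace = ((ρ * ρ) * (L j * (L j)ᴴ)).trace := by
        intro j
        rw [Matrix.trace_mul_cycle, Matrix.mul_assoc]
      simp only [this]
      rw [← Matrix.trace_sum, ← Finset.mul_sum, h2, Matrix.mul_one]
    rw [e1, e2, e3, e4]; ring
  intro j
  simp only [trace_CCH] at key
  rw [← Complex.ofReal_sum] at key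
  have hre : ∑ k, ∑ p, ∑ q, Complex.normSq ((L k * ρ - ρ * L k) p q) = 0 := by
    exact_mod_cast key
  have hnn : ∀ k ∈ Finset.univ, (0:ℝ) ≤ ∑ p, ∑ q, Complex.normSq ((L k * ρ - ρ * L k) p q) :=
    fun k _ => Finset.sum_nonneg fun p _ => Finset.sum_nonneg fun q _ => Complex.normSq_nonneg _
  have hz := (Finset.sum_eq_zero_iff_of_nonneg hnn).mp hre j (Finset.mem_univ j)
  have htr : ((L j * ρ - ρ * L j) * (L j * ρ - ρ * L j)ᴴ).trace = 0 := by
    rw [trace_CCH, hz]; simp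
  have := trace_selfmul_eq_zero htr
  exact sub_eq_zero.mp this


variable {A B : Type} [Fintype A] [DecidableEq A] [Fintype B] [DecidableEq B]

namespace SpecStuff

variable {H : Matrix A A ℂ} (hH : H.IsHermitian)

def U : Matrix A A ℂ := hH.eigenvectorUnitary

lemma U_mul_star : U hH * (U hH)ᴴ = 1 := by
  have := (Matrix.mem_unitaryGroup_iff).mp (hH.eigenvectorUnitary).2
  simpa [U, Matrix.star_eq_conjTranspose] using this

lemma star_mul_U : (U hH)ᴴ * U hH = 1 := by
  have := (Matrix.mem_unitaryGroup_iff').mp (hH.eigenvectorUnitary).2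
  simpa [U, Matrix.star_eq_conjTranspose] using this

lemma hUU : ∀ M : Matrix A A ℂ, (U hH)ᴴ * (U hH * M) = M := by
  intro M; rw [← Matrix.mul_assoc, star_mul_U, Matrix.one_mul]

/-- `g` applied to `H` by spectral calculus. -/
def F (g : ℝ → ℂ) : Matrix A A ℂ :=
  U hH * (diagonal fun k => g (hH.eigenvalues k)) * (U hH)ᴴ

lemma F_congr {g g' : ℝ → ℂ} (h : ∀ k, g (hH.eigenvalues k) = g' (hH.eigenvalues k)) :
    F hH g = F hH g' := by
  unfold F
  rw [show (fun k => g (hH.eigenvalues k)) = (fun k => g' (hH.eigenvalues k)) from funext h]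

lemma F_mul (g g' : ℝ → ℂ) : F hH g * F hH g' = F hH fun x => g x * g' x := by
  unfold F
  simp only [Matrix.mul_assoc, hUU hH]
  rw [← Matrix.mul_assoc (diagonal _), diagonal_mul_diagonal]

lemma F_conjT (g : ℝ → ℂ) : (F hH g)ᴴ = F hH fun x => star (g x) := by
  unfold F
  rw [conjTranspose_mul, conjTranspose_mul, conjTranspose_conjTranspose, diagonal_conjTranspose]
  rw [Matrix.mul_assoc]
  rfl

lemma F_smul (c : ℂ) (g : ℝ → ℂ) : c • F hH g = F hH fun x => c * g x := by
  unfold F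
  rw [← Matrix.smul_mul, ← Matrix.mul_smul, ← diagonal_smul]
  rfl

lemma F_sum {ι : Type} (s : Finset ι) (g : ι → ℝ → ℂ) :
    ∑ i ∈ s, F hH (g i) = F hH fun x => ∑ i ∈ s, g i x := by
  unfold F
  rw [← Finset.sum_mul, ← Finset.mul_sum]
  congr 2
  ext k l
  by_cases h : k = l <;> simp [diagonal, h, Matrix.sum_apply]

lemma spectral : H = F hH fun x => (x : ℂ) := by
  have := hH.spectral_theorem
  simpa [F, Matrix.star_eq_conjTranspose, Function.comp_def, U] using this

/-- spectral projection onto eigenvalue μ -/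
def specProj (μ : ℝ) : Matrix A A ℂ :=
  F hH fun x => if x = μ then (1:ℂ) else 0

lemma specProj_isProj (μ : ℝ) : IsProjection (specProj hH μ) := by
  constructor
  · unfold Matrix.IsHermitian specProj
    rw [F_conjT]
    apply F_congr
    intro k
    by_cases h : hH.eigenvalues k = μ <;> simp [h]
  · unfold specProj
    rw [F_mul]
    apply F_congr
    intro k
    by_cases h : hH.eigenvalues k = μ <;> simp [h]

lemma specProj_orth {μ ν : ℝ} (h : μ ≠ ν) : specProj hH μ * specProj hH ν = 0 := by
  unfold specProj
  rw [F_mul]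
  have hz : F hH (fun _ => (0:ℂ)) = 0 := by
    unfold F
    simp
  rw [← hz]
  apply F_congr
  intro k
  by_cases h1 : hH.eigenvalues k = μ
  · have h2 : hH.eigenvalues k ≠ ν := fun hh => h (h1.symm.trans hh)
    simp [h2]
  · simp [h1]

lemma H_eq_sum_specProj :
    H = ∑ μ ∈ Finset.image hH.eigenvalues Finset.univ, (μ:ℂ) • specProj hH μ := by
  have key : ∑ μ ∈ Finset.image hH.eigenvalues Finset.univ, (μ:ℂ) • specProj hH μ
      = F hH fun x => (x:ℂ) := by
    unfold specProj
    simp only [F_smul]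
    rw [F_sum]
    apply F_congr
    intro k
    rw [Finset.sum_eq_single_of_mem (hH.eigenvalues k)
      (Finset.mem_image_of_mem _ (Finset.mem_univ k))]
    · simp
    · intro μ _ hne
      have hk : hH.eigenvalues k ≠ μ := fun hh => hne hh.symm
      simp [hk]
  rw [key, ← spectral hH]

lemma H_mul_specProj (μ : ℝ) : H * specProj hH μ = (μ:ℂ) • specProj hH μ := by
  have key : F hH (fun x => (x:ℂ)) * specProj hH μ = (μ:ℂ) • specProj hH μ := by
    unfold specProj
    rw [F_mul, F_smul]
    apply F_congr
    intro k
    by_cases h : hH.eigenvalues k = μ <;> simp [h]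
  rw [← spectral hH] at key
  exact key

lemma specProj_mul_H (μ : ℝ) : specProj hH μ * H = (μ:ℂ) • specProj hH μ := by
  have key : specProj hH μ * F hH (fun x => (x:ℂ)) = (μ:ℂ) • specProj hH μ := by
    unfold specProj
    rw [F_mul, F_smul]
    apply F_congr
    intro k
    by_cases h : hH.eigenvalues k = μ <;> simp [h, mul_comm]
  rw [← spectral hH] at key
  exact key

end SpecStuff

lemma commute_conj_iff {X : Type} [Fintype X] [DecidableEq X]
    (U D M : Matrix X X ℂ) (hU : U * Uᴴ = 1) (hU' : Uᴴ * U = 1) :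
    Commute (U * D * Uᴴ) M ↔ Commute D (Uᴴ * M * U) := by
  have c1 : ∀ x : Matrix X X ℂ, Uᴴ * (U * x) = x := fun x => by
    rw [← Matrix.mul_assoc, hU', Matrix.one_mul]
  have c2 : ∀ x : Matrix X X ℂ, U * (Uᴴ * x) = x := fun x => by
    rw [← Matrix.mul_assoc, hU, Matrix.one_mul]
  constructor
  · intro h
    have h' := h.eq
    have : Uᴴ * ((U * D * Uᴴ) * M) * U = Uᴴ * (M * (U * D * Uᴴ)) * U := by rw [h']
    calc D * (Uᴴ * M * U) = Uᴴ * ((U * D * Uᴴ) * M) * U := by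
          simp only [Matrix.mul_assoc, c1, hU, hU', Matrix.mul_one]
      _ = Uᴴ * (M * (U * D * Uᴴ)) * U := this
      _ = (Uᴴ * M * U) * D := by
          simp only [Matrix.mul_assoc, c1, hU, hU', Matrix.mul_one]
  · intro h
    have h' := h.eq
    have : U * (D * (Uᴴ * M * U)) * Uᴴ = U * ((Uᴴ * M * U) * D) * Uᴴ := by rw [h']
    calc (U * D * Uᴴ) * M = U * (D * (Uᴴ * M * U)) * Uᴴ := by
          simp only [Matrix.mul_assoc, c2, hU, hU', Matrix.mul_one]
      _ = U * ((Uᴴ * M * U) * D) * Uᴴ := this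
      _ = M * (U * D * Uᴴ) := by
          simp only [Matrix.mul_assoc, c2, hU, hU', Matrix.mul_one]

lemma diag_commute_of {X : Type} [Fintype X] [DecidableEq X]
    (f g : X → ℂ) (M : Matrix X X ℂ) (hf : Commute (diagonal f) M)
    (h : ∀ p q, f p = f q → g p = g q) : Commute (diagonal g) M := by
  have key : ∀ p q, f p * M p q = M p q * f q := by
    intro p q
    have := congrFun (congrFun hf.eq p) q
    simpa [Matrix.mul_apply, diagonal, Finset.sum_ite_eq, Finset.sum_ite_eq'] using this
  show diagonal g * M = M * diagonal g
  ext p q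
  simp only [Matrix.mul_apply, diagonal, of_apply, ite_mul, mul_ite, zero_mul, mul_zero,
    Finset.sum_ite_eq, Finset.sum_ite_eq', Finset.mem_univ, if_true]
  by_cases hfe : f p = f q
  · rw [h p q hfe, mul_comm]
  · have : M p q = 0 := by
      have := key p q
      by_contra hM
      exact hfe (mul_right_cancel₀ hM (by rw [mul_comm (f p)] at this; linear_combination this))
    simp [this]
-- continuation
variable {A B : Type} [Fintype A] [DecidableEq A] [Fintype B] [DecidableEq B]

open SpecStuff in
lemma commute_F_kron {H : Matrix A A ℂ} (hH : H.IsHermitian)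
    (ρ : Matrix (A × B) (A × B) ℂ) (hc : Commute (H ⊗ₖ (1 : Matrix B B ℂ)) ρ)
    (g : ℝ → ℂ) : Commute (F hH g ⊗ₖ (1 : Matrix B B ℂ)) ρ := by
  set W : Matrix (A × B) (A × B) ℂ := U hH ⊗ₖ (1 : Matrix B B ℂ) with hW
  have hWH : Wᴴ = (U hH)ᴴ ⊗ₖ (1 : Matrix B B ℂ) := by
    rw [hW, kron_conjTranspose, conjTranspose_one]
  have hW1 : W * Wᴴ = 1 := by
    rw [hWH, hW, ← Matrix.mul_kronecker_mul, U_mul_star, Matrix.mul_one, Matrix.one_kronecker_one]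
  have hW2 : Wᴴ * W = 1 := by
    rw [hWH, hW, ← Matrix.mul_kronecker_mul, star_mul_U, Matrix.mul_one, Matrix.one_kronecker_one]
  have key : ∀ f : ℝ → ℂ,
      F hH f ⊗ₖ (1 : Matrix B B ℂ)
        = W * diagonal (fun p : A × B => f (hH.eigenvalues p.1)) * Wᴴ := by
    intro f
    rw [hW, hWH, ← diag_kron_one (fun k => f (hH.eigenvalues k)),
      ← Matrix.mul_kronecker_mul, ← Matrix.mul_kronecker_mul, Matrix.mul_one, Matrix.mul_one]
    rfl
  have hH1 : H ⊗ₖ (1 : Matrix B B ℂ)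
      = W * diagonal (fun p : A × B => ((hH.eigenvalues p.1 : ℝ) : ℂ)) * Wᴴ := by
    have := key fun x => (x : ℂ)
    rw [← spectral hH] at this
    exact this
  rw [hH1] at hc
  rw [commute_conj_iff _ _ _ hW1 hW2] at hc
  rw [key g, commute_conj_iff _ _ _ hW1 hW2]
  apply diag_commute_of _ _ _ hc
  intro p q hfe
  have : hH.eigenvalues p.1 = hH.eigenvalues q.1 := by exact_mod_cast hfe
  rw [this]
-- continuation 2
variable {A B : Type} [Fintype A] [DecidableEq A] [Fintype B] [DecidableEq B]

lemma commute_conjT_kron {T : Matrix A A ℂ} {ρ : Matrix (A × B) (A × B) ℂ}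
    (hρH : ρ.IsHermitian) (h : Commute (T ⊗ₖ (1 : Matrix B B ℂ)) ρ) :
    Commute (Tᴴ ⊗ₖ (1 : Matrix B B ℂ)) ρ := by
  have h' := h.eq
  have := congrArg conjTranspose h'
  rw [conjTranspose_mul, conjTranspose_mul, hρH.eq, kron_conjTranspose, conjTranspose_one]
    at this
  exact this.symm

open SpecStuff in
/-- commutation with ρ transfers to commutation with the essential projectors -/
lemma commute_H_Pr {H : Matrix A A ℂ} (hH : H.IsHermitian)
    {ρ : Matrix (A × B) (A × B) ℂ}
    (hcomm : Commute (H ⊗ₖ (1 : Matrix B B ℂ)) ρ) {n : ℕ} (Pr : Fin n → Matrix A A ℂ)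
    (hiii : ∀ P : Matrix A A ℂ, IsProjection P → (∃ i, ¬ Commute P (Pr i)) →
      ¬ Commute (P ⊗ₖ (1 : Matrix B B ℂ)) ρ) :
    ∀ i, Commute H (Pr i) := by
  intro i
  have hP : ∀ μ : ℝ, Commute (specProj hH μ) (Pr i) := by
    intro μ
    by_contra hnc
    exact hiii (specProj hH μ) (specProj_isProj hH μ) ⟨i, hnc⟩
      (commute_F_kron hH ρ hcomm _)
  rw [H_eq_sum_specProj hH]
  exact Finset.sum_induction _ (fun x => Commute x (Pr i))
    (fun a b ha hb => ha.add_left hb) (Commute.zero_left _)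
    (fun μ _ => (hP μ).smul_left _)

open SpecStuff in
/-- a Hermitian block operator commuting with a totally quantum block is scalar -/
lemma block_scalar {H Pp : Matrix A A ℂ} (hH : H.IsHermitian)
    (hPp : IsProjection Pp) (hPpne : Pp ≠ 0)
    (hHb1 : H * Pp = H) (hHb2 : Pp * H = H)
    {ρi : Matrix (A × B) (A × B) ℂ}
    (hcomm : Commute (H ⊗ₖ (1 : Matrix B B ℂ)) ρi)
    (htq : ∀ P : Matrix A A ℂ, IsProjection P → P * Pp = P → Pp * P = P →
      Commute (P ⊗ₖ (1 : Matrix B B ℂ)) ρi → P = 0 ∨ P = Pp) :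
    ∃ c : ℝ, H = (c : ℂ) • Pp := by
  have hPalt : ∀ μ : ℝ, μ ≠ 0 → specProj hH μ = 0 ∨ specProj hH μ = Pp := by
    intro μ hμ
    have hμC : (μ : ℂ) ≠ 0 := by exact_mod_cast hμ
    have hPmul : Pp * specProj hH μ = specProj hH μ := by
      have h1 : specProj hH μ = (μ:ℂ)⁻¹ • (H * specProj hH μ) := by
        rw [H_mul_specProj hH, smul_smul, inv_mul_cancel₀ hμC, one_smul]
      calc Pp * specProj hH μ = Pp * ((μ:ℂ)⁻¹ • (H * specProj hH μ)) := by rw [← h1]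
        _ = (μ:ℂ)⁻¹ • ((Pp * H) * specProj hH μ) := by
            rw [Matrix.mul_smul, Matrix.mul_assoc]
        _ = specProj hH μ := by rw [hHb2, ← h1]
    have hPmul' : specProj hH μ * Pp = specProj hH μ := by
      have h1 : specProj hH μ = (μ:ℂ)⁻¹ • (specProj hH μ * H) := by
        rw [specProj_mul_H hH, smul_smul, inv_mul_cancel₀ hμC, one_smul]
      calc specProj hH μ * Pp = ((μ:ℂ)⁻¹ • (specProj hH μ * H)) * Pp := by rw [← h1]
        _ = (μ:ℂ)⁻¹ • (specProj hH μ * (H * Pp)) := by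
            rw [Matrix.smul_mul, Matrix.mul_assoc]
        _ = specProj hH μ := by rw [hHb1, ← h1]
    exact htq _ (specProj_isProj hH μ) hPmul' hPmul (commute_F_kron hH ρi hcomm _)
  by_cases hex : ∃ μ₀ ∈ Finset.image hH.eigenvalues Finset.univ, μ₀ ≠ 0 ∧ specProj hH μ₀ = Pp
  · obtain ⟨μ₀, hμ₀mem, hμ₀ne, hμ₀⟩ := hex
    refine ⟨μ₀, ?_⟩
    rw [H_eq_sum_specProj hH, Finset.sum_eq_single_of_mem μ₀ hμ₀mem, hμ₀]
    intro μ hμmem hμne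
    by_cases hz : μ = 0
    · simp [hz]
    · rcases hPalt μ hz with h0 | hPpeq
      · simp [h0]
      · exfalso
        have horth := specProj_orth hH hμne
        rw [hPpeq, hμ₀] at horth
        rw [hPp.2] at horth
        exact hPpne horth
  · refine ⟨0, ?_⟩
    push_neg at hex
    rw [H_eq_sum_specProj hH]
    rw [Finset.sum_eq_zero, Complex.ofReal_zero, zero_smul]
    intro μ hμmem
    by_cases hz : μ = 0
    · simp [hz]
    · rcases hPalt μ hz with h0 | hPpeq
      · simp [h0]
      · exact absurd hPpeq (hex μ hμmem hz)
-- continuation 3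
variable {A B : Type} [Fintype A] [DecidableEq A] [Fintype B] [DecidableEq B]

lemma sub_kron (X Y : Matrix A A ℂ) (L : Matrix B B ℂ) :
    (X - Y) ⊗ₖ L = X ⊗ₖ L - Y ⊗ₖ L := by
  ext ⟨a,b⟩ ⟨a',b'⟩
  simp [kroneckerMap_apply, sub_mul]

lemma add_kron (X Y : Matrix A A ℂ) (L : Matrix B B ℂ) :
    (X + Y) ⊗ₖ L = X ⊗ₖ L + Y ⊗ₖ L := by
  ext ⟨a,b⟩ ⟨a',b'⟩
  simp [kroneckerMap_apply, add_mul]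

lemma smul_kron (c : ℂ) (X : Matrix A A ℂ) (L : Matrix B B ℂ) :
    (c • X) ⊗ₖ L = c • (X ⊗ₖ L) := by
  ext ⟨a,b⟩ ⟨a',b'⟩
  simp [kroneckerMap_apply, mul_assoc]

lemma kron_mul3 (X Y Z : Matrix A A ℂ) :
    (X * Y * Z) ⊗ₖ (1 : Matrix B B ℂ)
      = (X ⊗ₖ (1 : Matrix B B ℂ)) * (Y ⊗ₖ (1 : Matrix B B ℂ)) * (Z ⊗ₖ (1 : Matrix B B ℂ)) := by
  rw [← Matrix.mul_kronecker_mul, ← Matrix.mul_kronecker_mul, Matrix.mul_one, Matrix.mul_one]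

lemma herm_decomp (T : Matrix A A ℂ) :
    T = (2⁻¹ : ℂ) • ((T + Tᴴ) - Complex.I • (Complex.I • (T - Tᴴ))) := by
  rw [smul_smul, Complex.I_mul_I, neg_one_smul]
  module

lemma herm1 (T : Matrix A A ℂ) : (T + Tᴴ).IsHermitian := by
  unfold Matrix.IsHermitian
  rw [conjTranspose_add, conjTranspose_conjTranspose, add_comm]

lemma herm2 (T : Matrix A A ℂ) : (Complex.I • (T - Tᴴ)).IsHermitian := by
  unfold Matrix.IsHermitian
  rw [conjTranspose_smul, conjTranspose_sub, conjTranspose_conjTranspose]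
  simp [Complex.conj_I, smul_sub]
  abel

/-- Step A : each Kraus operator commutes with all essential projectors -/
lemma commute_T_Pr {T : Matrix A A ℂ} {ρ : Matrix (A × B) (A × B) ℂ}
    (hρH : ρ.IsHermitian) (hcomm : Commute (T ⊗ₖ (1 : Matrix B B ℂ)) ρ)
    {n : ℕ} (Pr : Fin n → Matrix A A ℂ)
    (hiii : ∀ P : Matrix A A ℂ, IsProjection P → (∃ i, ¬ Commute P (Pr i)) →
      ¬ Commute (P ⊗ₖ (1 : Matrix B B ℂ)) ρ) :
    ∀ i, Commute T (Pr i) := by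
  intro i
  have hcommH : Commute (Tᴴ ⊗ₖ (1 : Matrix B B ℂ)) ρ := commute_conjT_kron hρH hcomm
  have hc1 : Commute ((T + Tᴴ) ⊗ₖ (1 : Matrix B B ℂ)) ρ := by
    rw [add_kron]; exact hcomm.add_left hcommH
  have hc2 : Commute ((Complex.I • (T - Tᴴ)) ⊗ₖ (1 : Matrix B B ℂ)) ρ := by
    rw [smul_kron, sub_kron]
    exact ((hcomm.sub_left hcommH).smul_left _)
  have hH1 := commute_H_Pr (herm1 T) hc1 Pr hiii i
  have hH2 := commute_H_Pr (herm2 T) hc2 Pr hiii i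
  have := ((hH1.sub_left (hH2.smul_left Complex.I)).smul_left (2⁻¹ : ℂ))
  rw [← herm_decomp T] at this
  exact this

/-- Step B : on a type-I block every commuting operator is scalar -/
lemma blockT_scalar {T Pp : Matrix A A ℂ} {ρ : Matrix (A × B) (A × B) ℂ}
    (hρH : ρ.IsHermitian) (hcomm : Commute (T ⊗ₖ (1 : Matrix B B ℂ)) ρ)
    (hPp : IsProjection Pp) (hPne : Pp ≠ 0)
    (hcP : Commute (Pp ⊗ₖ (1 : Matrix B B ℂ)) ρ)
    (htq : ∀ P : Matrix A A ℂ, IsProjection P → P * Pp = P → Pp * P = P →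
      Commute (P ⊗ₖ (1 : Matrix B B ℂ))
        ((Pp ⊗ₖ (1 : Matrix B B ℂ)) * ρ * (Pp ⊗ₖ (1 : Matrix B B ℂ))) → P = 0 ∨ P = Pp) :
    ∃ α : ℂ, Pp * T * Pp = α • Pp := by
  set ρi := (Pp ⊗ₖ (1 : Matrix B B ℂ)) * ρ * (Pp ⊗ₖ (1 : Matrix B B ℂ)) with hρi
  set T' := Pp * T * Pp with hT'
  have hPH : Ppᴴ = Pp := hPp.1
  have hT'H : T'ᴴ = Pp * Tᴴ * Pp := by
    rw [hT', conjTranspose_mul, conjTranspose_mul, hPH, Matrix.mul_assoc]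
  have hcommH : Commute (Tᴴ ⊗ₖ (1 : Matrix B B ℂ)) ρ := commute_conjT_kron hρH hcomm
  have hcT' : Commute (T' ⊗ₖ (1 : Matrix B B ℂ)) ρ := by
    rw [hT', kron_mul3]
    exact (hcP.mul_left hcomm).mul_left hcP
  have hcT'H : Commute (T'ᴴ ⊗ₖ (1 : Matrix B B ℂ)) ρ := by
    rw [hT'H, kron_mul3]
    exact (hcP.mul_left hcommH).mul_left hcP
  -- block conditions
  have hTb1 : T' * Pp = T' := by rw [hT', Matrix.mul_assoc (Pp * T), hPp.2]
  have hTb2 : Pp * T' = T' := by rw [hT', ← Matrix.mul_assoc, ← Matrix.mul_assoc, hPp.2]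
  have hTHb1 : T'ᴴ * Pp = T'ᴴ := by rw [hT'H, Matrix.mul_assoc (Pp * Tᴴ), hPp.2]
  have hTHb2 : Pp * T'ᴴ = T'ᴴ := by rw [hT'H, ← Matrix.mul_assoc, ← Matrix.mul_assoc, hPp.2]
  -- commuting with ρi
  have comm_ρi : ∀ X : Matrix A A ℂ, Commute (X ⊗ₖ (1 : Matrix B B ℂ)) ρ →
      X * Pp = X → Pp * X = X → Commute (X ⊗ₖ (1 : Matrix B B ℂ)) ρi := by
    intro X hX hb1 hb2
    have hXP : Commute (X ⊗ₖ (1 : Matrix B B ℂ)) (Pp ⊗ₖ (1 : Matrix B B ℂ)) := by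
      show _ = _
      rw [← Matrix.mul_kronecker_mul, ← Matrix.mul_kronecker_mul, Matrix.mul_one, hb1, hb2]
    exact (hXP.mul_right hX).mul_right hXP
  -- apply block_scalar to the two Hermitian parts
  obtain ⟨c1, hc1⟩ := block_scalar (herm1 T') hPp hPne
    (by rw [add_mul, hTb1, hTHb1]) (by rw [mul_add, hTb2, hTHb2])
    (comm_ρi _ (by rw [add_kron]; exact hcT'.add_left hcT'H)
      (by rw [add_mul, hTb1, hTHb1]) (by rw [mul_add, hTb2, hTHb2])) htq
  obtain ⟨c2, hc2⟩ := block_scalar (herm2 T') hPp hPne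
    (by rw [Matrix.smul_mul, sub_mul, hTb1, hTHb1]) (by rw [Matrix.mul_smul, mul_sub, hTb2, hTHb2])
    (comm_ρi _ (by rw [smul_kron, sub_kron]; exact ((hcT'.sub_left hcT'H).smul_left _))
      (by rw [Matrix.smul_mul, sub_mul, hTb1, hTHb1])
      (by rw [Matrix.mul_smul, mul_sub, hTb2, hTHb2])) htq
  refine ⟨(2⁻¹ : ℂ) * ((c1 : ℂ) - Complex.I * (c2 : ℂ)), ?_⟩
  have hdec := herm_decomp T'
  rw [hc1, hc2] at hdec
  rw [hdec]
  module
-- continuation 4: assembly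
variable {A B : Type} [Fintype A] [DecidableEq A] [Fintype B] [DecidableEq B]

section Main

variable {n : ℕ} {Pr : Fin n → Matrix A A ℂ} {I II : Finset (Fin n)}
  {ρ : Matrix (A × B) (A × B) ℂ}

/-- forward direction core: a fixed unital channel has Kraus operators commuting with
the essential projectors and scalar on type-I blocks. -/
lemma main_forward
    (hρH : ρ.IsHermitian)
    (hproj : ∀ i, IsProjection (Pr i))
    (hne : ∀ i, Pr i ≠ 0)
    (hcommPr : ∀ i, Commute (Pr i ⊗ₖ (1 : Matrix B B ℂ)) ρ)
    (hTQ : ∀ i ∈ I, ∀ P : Matrix A A ℂ, IsProjection P → P * Pr i = P → Pr i * P = P →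
      Commute (P ⊗ₖ (1 : Matrix B B ℂ))
        ((Pr i ⊗ₖ (1 : Matrix B B ℂ)) * ρ * (Pr i ⊗ₖ (1 : Matrix B B ℂ))) →
      P = 0 ∨ P = Pr i)
    (hiii : ∀ P : Matrix A A ℂ, IsProjection P → (∃ i, ¬ Commute P (Pr i)) →
      ¬ Commute (P ⊗ₖ (1 : Matrix B B ℂ)) ρ)
    {m : ℕ} (K : Fin m → Matrix A A ℂ)
    (htp : ∑ j, (K j)ᴴ * K j = 1) (hun : ∑ j, K j * (K j)ᴴ = 1)
    (hfix : ∑ j, (K j ⊗ₖ (1 : Matrix B B ℂ)) * ρ * (K j ⊗ₖ (1 : Matrix B B ℂ))ᴴ = ρ) :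
    ∀ j, (∀ i, Commute (K j) (Pr i)) ∧
      (∀ i ∈ I, ∃ α : ℂ, Pr i * K j * Pr i = α • Pr i) := by
  set L : Fin m → Matrix (A × B) (A × B) ℂ := fun j => K j ⊗ₖ (1 : Matrix B B ℂ) with hL
  have hLH : ∀ j, (L j)ᴴ = (K j)ᴴ ⊗ₖ (1 : Matrix B B ℂ) := fun j => by
    rw [hL, kron_conjTranspose, conjTranspose_one]
  have hL1 : ∑ j, (L j)ᴴ * L j = 1 := by
    simp only [hLH, hL, kron_conjTranspose, conjTranspose_one, ← Matrix.mul_kronecker_mul, Matrix.mul_one]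
    rw [← sum_kron, htp, Matrix.one_kronecker_one]
  have hL2 : ∑ j, L j * (L j)ᴴ = 1 := by
    simp only [hLH, hL, kron_conjTranspose, conjTranspose_one, ← Matrix.mul_kronecker_mul, Matrix.mul_one]
    rw [← sum_kron, hun, Matrix.one_kronecker_one]
  have hLfix : ∑ j, L j * ρ * (L j)ᴴ = ρ := hfix
  have hcomm : ∀ j, Commute (L j) ρ := commute_of_fixed L ρ hρH hL1 hL2 hLfix
  intro j
  constructor
  · exact commute_T_Pr hρH (hcomm j) Pr hiii
  · intro i hi
    exact blockT_scalar hρH (hcomm j) (hproj i) (hne i) (hcommPr i) (hTQ i hi)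

end Main
-- continuation 5
variable {A B : Type} [Fintype A] [DecidableEq A] [Fintype B] [DecidableEq B]

section Main2

variable {n : ℕ} {Pr : Fin n → Matrix A A ℂ} {I II : Finset (Fin n)}

lemma smul_eq_self_of_ne_zero {M : Matrix A A ℂ} (hM : M ≠ 0) {c : ℂ}
    (h : c • M = M) : c = 1 := by
  have h0 : (c - 1) • M = 0 := by rw [sub_smul, one_smul, h, sub_self]
  rcases smul_eq_zero.mp h0 with hc | hm
  · exact sub_eq_zero.mp hc
  · exact absurd hm hM

lemma rhs1_to_rhs2
    (hproj : ∀ i, IsProjection (Pr i))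
    (horth : ∀ i j, i ≠ j → Pr i * Pr j = 0)
    (hne : ∀ i, Pr i ≠ 0)
    (hdisj : Disjoint I II) (hunion : I ∪ II = Finset.univ)
    (N : Matrix A A ℂ →ₗ[ℂ] Matrix A A ℂ)
    {m : ℕ} (K : Fin m → Matrix A A ℂ)
    (hrep : ∀ X, N X = ∑ j, K j * X * (K j)ᴴ)
    (htp : ∑ j, (K j)ᴴ * K j = 1)
    (hform : ∀ j, ∃ α : Fin n → ℂ,
      K j = ∑ i ∈ I, α i • Pr i + ∑ i ∈ II, Pr i * K j * Pr i) :
    (∀ i, ∀ X : Matrix A A ℂ,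
        N (Pr i * X * Pr i) = Pr i * N (Pr i * X * Pr i) * Pr i) ∧
    (∀ i ∈ I, ∀ X : Matrix A A ℂ, N (Pr i * X * Pr i) = Pr i * X * Pr i) := by
  choose α hα using hform
  have hKPI : ∀ j, ∀ i ∈ I, K j * Pr i = α j i • Pr i := by
    intro j i hi
    conv_lhs => rw [hα j]
    rw [add_mul, Finset.sum_mul, Finset.sum_mul]
    rw [Finset.sum_eq_single_of_mem i hi (fun i' _ hii => by
      rw [Matrix.smul_mul, horth i' i hii, smul_zero])]
    rw [Matrix.smul_mul, (hproj i).2]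
    rw [Finset.sum_eq_zero (fun i' hi' => by
      have hii : i' ≠ i := fun hh => (Finset.disjoint_left.mp hdisj hi) (hh ▸ hi')
      rw [Matrix.mul_assoc (Pr i' * K j), horth i' i hii, Matrix.mul_zero]), add_zero]
  have hKPII : ∀ j, ∀ i ∈ II, K j * Pr i = Pr i * K j * Pr i := by
    intro j i hi
    conv_lhs => rw [hα j]
    rw [add_mul, Finset.sum_mul, Finset.sum_mul]
    rw [Finset.sum_eq_zero (fun i' hi' => by
      have hii : i' ≠ i := fun hh => (Finset.disjoint_right.mp hdisj hi) (hh ▸ hi')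
      rw [Matrix.smul_mul, horth i' i hii, smul_zero]), zero_add]
    rw [Finset.sum_eq_single_of_mem i hi (fun i' _ hii => by
      rw [Matrix.mul_assoc (Pr i' * K j), horth i' i hii, Matrix.mul_zero])]
    rw [Matrix.mul_assoc (Pr i * K j), (hproj i).2]
  -- K j * Pr i absorbs Pr i on the left, for every i
  have hleft : ∀ j i, Pr i * (K j * Pr i) = K j * Pr i := by
    intro j i
    have hmem : i ∈ I ∪ II := hunion ▸ Finset.mem_univ i
    rcases Finset.mem_union.mp hmem with hi | hi
    · rw [hKPI j i hi, Matrix.mul_smul, (hproj i).2]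
    · rw [hKPII j i hi, ← Matrix.mul_assoc, ← Matrix.mul_assoc, (hproj i).2]
  have hright : ∀ j i, (Pr i * (K j)ᴴ) * Pr i = Pr i * (K j)ᴴ := by
    intro j i
    have h := congrArg Matrix.conjTranspose (hleft j i)
    simp only [conjTranspose_mul, (hproj i).1.eq] at h
    exact h
  constructor
  · intro i X
    rw [hrep (Pr i * X * Pr i), Finset.mul_sum, Finset.sum_mul]
    apply Finset.sum_congr rfl
    intro j _
    calc K j * (Pr i * X * Pr i) * (K j)ᴴ
        = (K j * Pr i) * X * (Pr i * (K j)ᴴ) := by simp only [Matrix.mul_assoc]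
      _ = (Pr i * (K j * Pr i)) * X * ((Pr i * (K j)ᴴ) * Pr i) := by
          rw [hleft j i, hright j i]
      _ = Pr i * (K j * (Pr i * X * Pr i) * (K j)ᴴ) * Pr i := by
          simp only [Matrix.mul_assoc]
  · intro i hi X
    have hPKH : ∀ j, Pr i * (K j)ᴴ = star (α j i) • Pr i := by
      intro j
      have := congrArg Matrix.conjTranspose (hKPI j i hi)
      rw [conjTranspose_mul, conjTranspose_smul, (hproj i).1.eq] at this
      exact this
    have hscalar : ∑ j, star (α j i) * α j i = 1 := by
      apply smul_eq_self_of_ne_zero (hne i)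
      have h1 : Pr i * (1 : Matrix A A ℂ) * Pr i = Pr i := by
        rw [Matrix.mul_one, (hproj i).2]
      calc (∑ j, star (α j i) * α j i) • Pr i
          = ∑ j, (star (α j i) * α j i) • Pr i := Finset.sum_smul
        _ = ∑ j, (Pr i * (K j)ᴴ) * (K j * Pr i) := by
            apply Finset.sum_congr rfl
            intro j _
            rw [hPKH j, hKPI j i hi, Matrix.smul_mul, Matrix.mul_smul, (hproj i).2,
              smul_smul]
        _ = Pr i * (∑ j, (K j)ᴴ * K j) * Pr i := by
            rw [Finset.mul_sum, Finset.sum_mul]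
            apply Finset.sum_congr rfl
            intro j _
            simp only [Matrix.mul_assoc]
        _ = Pr i := by rw [htp, h1]
    rw [hrep (Pr i * X * Pr i)]
    calc ∑ j, K j * (Pr i * X * Pr i) * (K j)ᴴ
        = ∑ j, (K j * Pr i) * X * (Pr i * (K j)ᴴ) := by
          apply Finset.sum_congr rfl
          intro j _
          simp only [Matrix.mul_assoc]
      _ = ∑ j, (star (α j i) * α j i) • (Pr i * X * Pr i) := by
          apply Finset.sum_congr rfl
          intro j _
          rw [hKPI j i hi, hPKH j]
          simp only [Matrix.smul_mul, Matrix.mul_smul, smul_smul]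
      _ = (∑ j, star (α j i) * α j i) • (Pr i * X * Pr i) := Finset.sum_smul.symm
      _ = Pr i * X * Pr i := by rw [hscalar, one_smul]

end Main2
-- continuation 6
variable {A B : Type} [Fintype A] [DecidableEq A] [Fintype B] [DecidableEq B]

section Main3

variable {n : ℕ} {Pr : Fin n → Matrix A A ℂ} {I II : Finset (Fin n)}
  {ρ : Matrix (A × B) (A × B) ℂ}

lemma rhs2_to_lhs
    (hproj : ∀ i, IsProjection (Pr i))
    (horth : ∀ i j, i ≠ j → Pr i * Pr j = 0)
    (hsum : ∑ i, Pr i = 1)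
    (hunion : I ∪ II = Finset.univ)
    (hcommPr : ∀ i, Commute (Pr i ⊗ₖ (1 : Matrix B B ℂ)) ρ)
    (hII : ∀ i ∈ II, ∃ (r : ℕ) (σi : Matrix B B ℂ), 0 < r ∧ (Pr i).trace = (r : ℂ) ∧
      (IsDensity σi) ∧
      (Pr i ⊗ₖ (1 : Matrix B B ℂ)) * ρ * (Pr i ⊗ₖ (1 : Matrix B B ℂ))
        = (((Pr i ⊗ₖ (1 : Matrix B B ℂ)) * ρ).trace / (r : ℂ)) • (Pr i ⊗ₖ σi))
    (N : Matrix A A ℂ →ₗ[ℂ] Matrix A A ℂ) (hNu : N 1 = 1)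
    (h1 : ∀ i, ∀ X : Matrix A A ℂ,
        N (Pr i * X * Pr i) = Pr i * N (Pr i * X * Pr i) * Pr i)
    (h2 : ∀ i ∈ I, ∀ X : Matrix A A ℂ, N (Pr i * X * Pr i) = Pr i * X * Pr i) :
    extendFst N ρ = ρ := by
  -- N fixes each projector
  have hNPr : ∀ i, N (Pr i) = Pr i := by
    intro i
    have hP1 : ∀ k, Pr k * (1 : Matrix A A ℂ) * Pr k = Pr k := fun k => by
      rw [Matrix.mul_one, (hproj k).2]
    have hs : ∀ k, N (Pr k) = Pr k * N (Pr k) * Pr k := by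
      intro k
      have h := h1 k 1
      rw [hP1 k] at h
      exact h
    have hone : ∑ k, N (Pr k) = 1 := by rw [← map_sum, hsum, hNu]
    have key : Pr i * (1 : Matrix A A ℂ) * Pr i = N (Pr i) := by
      rw [← hone, Finset.mul_sum, Finset.sum_mul]
      rw [Finset.sum_eq_single_of_mem i (Finset.mem_univ i) (fun k _ hk => by
        rw [hs k]
        simp only [← Matrix.mul_assoc]
        rw [horth i k (Ne.symm hk)]
        simp)]
      exact (hs i).symm
    rw [← key, hP1 i]
  -- ρ decomposes into blocks
  have hkronProj : ∀ i, (Pr i ⊗ₖ (1 : Matrix B B ℂ)) * (Pr i ⊗ₖ (1 : Matrix B B ℂ))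
      = Pr i ⊗ₖ (1 : Matrix B B ℂ) := by
    intro i
    rw [← Matrix.mul_kronecker_mul, (hproj i).2, Matrix.mul_one]
  have hdecomp : ρ = ∑ i, (Pr i ⊗ₖ (1 : Matrix B B ℂ)) * ρ * (Pr i ⊗ₖ (1 : Matrix B B ℂ)) := by
    calc ρ = 1 * ρ := (Matrix.one_mul ρ).symm
      _ = (∑ i, Pr i ⊗ₖ (1 : Matrix B B ℂ)) * ρ := by
          rw [← sum_kron, hsum, Matrix.one_kronecker_one]
      _ = ∑ i, (Pr i ⊗ₖ (1 : Matrix B B ℂ)) * ρ := Finset.sum_mul _ _ _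
      _ = ∑ i, (Pr i ⊗ₖ (1 : Matrix B B ℂ)) * ρ * (Pr i ⊗ₖ (1 : Matrix B B ℂ)) := by
          apply Finset.sum_congr rfl
          intro i _
          calc (Pr i ⊗ₖ (1 : Matrix B B ℂ)) * ρ
              = ((Pr i ⊗ₖ (1 : Matrix B B ℂ)) * (Pr i ⊗ₖ (1 : Matrix B B ℂ))) * ρ := by
                rw [hkronProj i]
            _ = (Pr i ⊗ₖ (1 : Matrix B B ℂ)) * ((Pr i ⊗ₖ (1 : Matrix B B ℂ)) * ρ) := by
                rw [Matrix.mul_assoc]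
            _ = (Pr i ⊗ₖ (1 : Matrix B B ℂ)) * (ρ * (Pr i ⊗ₖ (1 : Matrix B B ℂ))) := by
                rw [(hcommPr i).eq]
            _ = (Pr i ⊗ₖ (1 : Matrix B B ℂ)) * ρ * (Pr i ⊗ₖ (1 : Matrix B B ℂ)) := by
                rw [Matrix.mul_assoc]
  -- each block is fixed
  have hblock : ∀ i, extendFst N ((Pr i ⊗ₖ (1 : Matrix B B ℂ)) * ρ * (Pr i ⊗ₖ (1 : Matrix B B ℂ)))
      = (Pr i ⊗ₖ (1 : Matrix B B ℂ)) * ρ * (Pr i ⊗ₖ (1 : Matrix B B ℂ)) := by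
    intro i
    have hmem : i ∈ I ∪ II := hunion ▸ Finset.mem_univ i
    rcases Finset.mem_union.mp hmem with hi | hi
    · ext ⟨p1, p2⟩ ⟨q1, q2⟩
      rw [extendFst_eq_blk, blk_conj, h2 i hi (blkM ρ p2 q2)]
      have hb := congrFun (congrFun (congrArg (fun (X : Matrix A A ℂ) => (X : A → A → ℂ))
        (blk_conj (Pr i) (Pr i) ρ p2 q2)) p1) q1
      exact hb.symm
    · obtain ⟨r, σi, hr, htr, hσ, heq⟩ := hII i hi
      rw [heq, extendFst_smul, extendFst_kron, hNPr i]
  conv_lhs => rw [hdecomp]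
  rw [extendFst_sum]
  conv_rhs => rw [hdecomp]
  exact Finset.sum_congr rfl fun i _ => hblock i

end Main3

section Glue

variable {A B : Type} [Fintype A] [DecidableEq A] [Fintype B] [DecidableEq B]

lemma stmt7_main (ρ : Matrix (A × B) (A × B) ℂ) (hρ : IsDensity ρ)
    {n : ℕ} (Pr : Fin n → Matrix A A ℂ) (I II : Finset (Fin n))
    (hess : EssDecompFst ρ Pr I II)
    (N : Matrix A A ℂ →ₗ[ℂ] Matrix A A ℂ) (hN : IsCPTP N) (hNu : N 1 = 1) :
    (extendFst N ρ = ρ ↔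
      ∃ (m : ℕ) (K : Fin m → Matrix A A ℂ),
        (∀ X, N X = ∑ j, K j * X * (K j)ᴴ) ∧ (∑ j, (K j)ᴴ * K j = 1) ∧
        ∀ j, ∃ α : Fin n → ℂ,
          K j = ∑ i ∈ I, α i • Pr i + ∑ i ∈ II, Pr i * K j * Pr i)
    ∧
    (extendFst N ρ = ρ ↔
      (∀ i, ∀ X : Matrix A A ℂ,
          N (Pr i * X * Pr i) = Pr i * N (Pr i * X * Pr i) * Pr i) ∧
      (∀ i ∈ I, ∀ X : Matrix A A ℂ, N (Pr i * X * Pr i) = Pr i * X * Pr i)) := by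
  obtain ⟨hproj, horth, hsum, hne, hdisj, hunion, hcommPr, hTQ, hII, hiii⟩ := hess
  obtain ⟨m, K, hrep, htp⟩ := hN
  have hρH : ρ.IsHermitian := hρ.1.1
  have hun : ∑ j, K j * (K j)ᴴ = 1 := by
    have h := hrep 1
    simp only [Matrix.mul_one] at h
    rw [← h]
    exact hNu
  have hfwd : extendFst N ρ = ρ →
      ∃ (m : ℕ) (K : Fin m → Matrix A A ℂ),
        (∀ X, N X = ∑ j, K j * X * (K j)ᴴ) ∧ (∑ j, (K j)ᴴ * K j = 1) ∧
        ∀ j, ∃ α : Fin n → ℂ,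
          K j = ∑ i ∈ I, α i • Pr i + ∑ i ∈ II, Pr i * K j * Pr i := by
    intro hfix
    have hfix' : ∑ j, (K j ⊗ₖ (1 : Matrix B B ℂ)) * ρ * (K j ⊗ₖ (1 : Matrix B B ℂ))ᴴ = ρ := by
      rw [← extendFst_kraus N K hrep ρ]
      exact hfix
    have hcore := main_forward hρH hproj hne hcommPr hTQ hiii K htp hun hfix'
    refine ⟨m, K, hrep, htp, fun j => ?_⟩
    obtain ⟨hcommj, hαj⟩ := hcore j
    refine ⟨fun i => if h : i ∈ I then (hαj i h).choose else 0, ?_⟩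
    have hKblock : K j = ∑ i, Pr i * K j * Pr i := by
      calc K j = K j * 1 := (Matrix.mul_one _).symm
        _ = K j * ∑ i, Pr i := by rw [hsum]
        _ = ∑ i, K j * Pr i := Finset.mul_sum _ _ _
        _ = ∑ i, Pr i * K j * Pr i := by
            refine Finset.sum_congr rfl fun i _ => ?_
            calc K j * Pr i = K j * (Pr i * Pr i) := by rw [(hproj i).2]
              _ = (K j * Pr i) * Pr i := by rw [Matrix.mul_assoc]
              _ = (Pr i * K j) * Pr i := by rw [(hcommj i).eq]
    conv_lhs => rw [hKblock]
    rw [show (Finset.univ : Finset (Fin n)) = I ∪ II from hunion.symm,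
      Finset.sum_union hdisj]
    congr 1
    refine Finset.sum_congr rfl fun i hi => ?_
    refine ((hαj i hi).choose_spec).trans ?_
    congr 1
    simp only [dif_pos hi]
  have h12 : (∃ (m : ℕ) (K : Fin m → Matrix A A ℂ),
        (∀ X, N X = ∑ j, K j * X * (K j)ᴴ) ∧ (∑ j, (K j)ᴴ * K j = 1) ∧
        ∀ j, ∃ α : Fin n → ℂ,
          K j = ∑ i ∈ I, α i • Pr i + ∑ i ∈ II, Pr i * K j * Pr i) →
      ((∀ i, ∀ X : Matrix A A ℂ,
          N (Pr i * X * Pr i) = Pr i * N (Pr i * X * Pr i) * Pr i) ∧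
      (∀ i ∈ I, ∀ X : Matrix A A ℂ, N (Pr i * X * Pr i) = Pr i * X * Pr i)) := by
    rintro ⟨m', K', hrep', htp', hform'⟩
    exact rhs1_to_rhs2 hproj horth hne hdisj hunion N K' hrep' htp' hform'
  have hback2 : ((∀ i, ∀ X : Matrix A A ℂ,
          N (Pr i * X * Pr i) = Pr i * N (Pr i * X * Pr i) * Pr i) ∧
      (∀ i ∈ I, ∀ X : Matrix A A ℂ, N (Pr i * X * Pr i) = Pr i * X * Pr i)) →
      extendFst N ρ = ρ := by
    rintro ⟨h1, h2⟩
    exact rhs2_to_lhs hproj horth hsum hunion hcommPr hII N hNu h1 h2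
  exact ⟨⟨hfwd, fun h => hback2 (h12 h)⟩, ⟨fun h => h12 (hfwd h), hback2⟩⟩

end Glue

end Helpers

/-- for `ρ` PC-Q with respect to its essential decomposition on `A`,
a unital quantum channel `N` on `A` fixes `ρ` iff `N` admits a Kraus representation in
which every Kraus operator has the standard block-diagonal form; equivalently, iff `N`
preserves every subspace `A_i` and acts as the identity on operators supported on a
type I subspace. -/
theorem stmt_7 {A B : Type} [Fintype A] [DecidableEq A] [Fintype B] [DecidableEq B]
    (ρ : Matrix (A × B) (A × B) ℂ) (hρ : IsDensity ρ)
    {n : ℕ} (hn : 2 ≤ n) (Pr : Fin n → Matrix A A ℂ) (I II : Finset (Fin n))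
    (hess : EssDecompFst ρ Pr I II)
    (N : Matrix A A ℂ →ₗ[ℂ] Matrix A A ℂ) (hN : IsCPTP N) (hNu : N 1 = 1) :
    (extendFst N ρ = ρ ↔
      ∃ (m : ℕ) (K : Fin m → Matrix A A ℂ),
        (∀ X, N X = ∑ j, K j * X * (K j)ᴴ) ∧ (∑ j, (K j)ᴴ * K j = 1) ∧
        ∀ j, ∃ α : Fin n → ℂ,
          K j = ∑ i ∈ I, α i • Pr i + ∑ i ∈ II, Pr i * K j * Pr i)
    ∧
    (extendFst N ρ = ρ ↔
      (∀ i, ∀ X : Matrix A A ℂ,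
          N (Pr i * X * Pr i) = Pr i * N (Pr i * X * Pr i) * Pr i) ∧
      (∀ i ∈ I, ∀ X : Matrix A A ℂ, N (Pr i * X * Pr i) = Pr i * X * Pr i)) := by
  exact stmt7_main ρ hρ Pr I II hess N hN hNu
end

section
/- Let σ_{RAB} be a tripartite density matrix and U a unitary on A⊗B such that 1_R⊗U utilizes only the semantic information of B in σ_{RAB}, i.e., the unitary 1_R⊗U on (R⊗A)⊗B is compatible with σ_{RAB} on B in the canonical case (the local unitary V on B equals the identity). Then for every linear map L on operators on A, Tr_A[(1_R⊗U)((id_R⊗L⊗id_B)(σ_{RAB}))(1_R⊗U)†] = Tr_A[(id_R⊗L⊗id_B)(σ_{RAB})]; in particular, taking L = id_A, Tr_A[(1_R⊗U)σ_{RAB}(1_R⊗U)†] = σ_{RB} where σ_{RB} = Tr_A[σ_{RAB}]. -/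
open scoped Matrix Kronecker ComplexOrder Classical

-- ====== auxiliary lemmas ======

lemma aux_isDensity_vecConj {I : Type*} [Fintype I] (w : I → ℂ) (c : ℝ) (hc : 0 < c)
    (htr : ∑ i, w i * (starRingEnd ℂ) (w i) = (c : ℂ)) :
    IsDensity (((c : ℂ)⁻¹) • Matrix.vecMulVec w (star w)) := by
  have herm : (((c : ℂ)⁻¹) • Matrix.vecMulVec w (star w)).IsHermitian := by
    ext i j
    simp [Matrix.IsHermitian, Matrix.conjTranspose_apply, Matrix.vecMulVec_apply,
      Pi.star_apply, mul_comm, Complex.conj_ofReal]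
  refine ⟨Matrix.PosSemidef.of_dotProduct_mulVec_nonneg herm fun x => ?_, ?_⟩
  · have hmv : (Matrix.vecMulVec w (star w)) *ᵥ x = (star w ⬝ᵥ x) • w := by
      ext i
      simp [Matrix.mulVec, Matrix.vecMulVec_apply, dotProduct, Finset.mul_sum, mul_assoc,
        Finset.sum_mul]
      apply Finset.sum_congr rfl; intro j _; ring
    have key : star x ⬝ᵥ ((((c : ℂ)⁻¹) • Matrix.vecMulVec w (star w)) *ᵥ x)
        = (c : ℂ)⁻¹ * ((star x ⬝ᵥ w) * (star w ⬝ᵥ x)) := by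
      rw [Matrix.smul_mulVec, hmv]
      simp [dotProduct_smul, smul_eq_mul]
      exact Or.inl (mul_comm _ _)
    rw [key]
    have hconj : star x ⬝ᵥ w = (starRingEnd ℂ) (star w ⬝ᵥ x) := by
      simp [dotProduct, map_sum, mul_comm]
    rw [hconj]
    set z := star w ⬝ᵥ x
    have hz : (starRingEnd ℂ) z * z = ((Complex.normSq z : ℝ) : ℂ) := by
      rw [mul_comm]; exact Complex.mul_conj z
    rw [hz, ← Complex.ofReal_inv, ← Complex.ofReal_mul, Complex.zero_le_real]
    exact mul_nonneg (inv_nonneg.2 hc.le) (Complex.normSq_nonneg z)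
  · rw [Matrix.trace_smul]
    rw [show (Matrix.vecMulVec w (star w)).trace = ∑ i, w i * (starRingEnd ℂ) (w i) by
      simp [Matrix.trace, Matrix.diag, Matrix.vecMulVec_apply, Pi.star_apply]]
    rw [htr]
    rw [smul_eq_mul]
    field_simp

lemma aux_ptraceL_add {A B : Type*} [Fintype A] (M N : Matrix (A × B) (A × B) ℂ) :
    ptraceL (M + N) = ptraceL M + ptraceL N := by
  ext b b'; simp [ptraceL, Finset.sum_add_distrib]

lemma aux_ptraceL_smul {A B : Type*} [Fintype A] (x : ℂ) (M : Matrix (A × B) (A × B) ℂ) :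
    ptraceL (x • M) = x • ptraceL M := by
  ext b b'; simp [ptraceL, Finset.mul_sum]

lemma aux_ptraceMid_sum {R A B : Type*} [Fintype A] {ι : Type*} (s : Finset ι)
    (f : ι → Matrix ((R × A) × B) ((R × A) × B) ℂ) :
    ptraceMid (∑ i ∈ s, f i) = ∑ i ∈ s, ptraceMid (f i) := by
  ext p q; simp [ptraceMid, Matrix.sum_apply]; rw [Finset.sum_comm]

set_option maxHeartbeats 4000000 in
lemma aux_Fstd_entry {R A B : Type} [Fintype R] [DecidableEq R] [Fintype A] [DecidableEq A]
    [Fintype B] [DecidableEq B]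
    (σ : Matrix ((R × A) × B) ((R × A) × B) ℂ) (U : Matrix (A × B) (A × B) ℂ)
    (s0 : R) (c1 c2 : A) (r r' : R) (a a' : A) (b b' : B) :
    ptraceL (copyW (oneTensor U) * ((Matrix.single (s0, c1) (s0, c2) (1:ℂ)) ⊗ₖ σ)
        * (copyW (oneTensor U))ᴴ) ((r, a), b) ((r', a'), b')
      = ∑ c : A, ∑ b1 : B, ∑ b2 : B,
          U (c, b) (c1, b1) * σ ((r, a), b1) ((r', a'), b2)
            * (starRingEnd ℂ) (U (c, b') (c2, b2)) := by
  simp only [ptraceL, copyW, oneTensor, Matrix.mul_apply, Matrix.conjTranspose_apply,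
    Matrix.kroneckerMap_apply, Matrix.of_apply, Matrix.single, star_mul', star_zero,
    Fintype.sum_prod_type, mul_ite, ite_mul, mul_zero, zero_mul, mul_one, one_mul,
    Finset.sum_ite_eq, Finset.sum_ite_eq', Finset.mem_univ, if_true,
    star_one, Finset.sum_ite_irrel, Finset.sum_const_zero]
  simp [Prod.mk.injEq, ite_and]
  simp only [apply_ite (starRingEnd ℂ), map_zero, mul_ite, mul_zero, Finset.sum_ite_irrel,
    Finset.sum_const_zero, Finset.sum_ite_eq, Finset.mem_univ, if_true, Finset.sum_mul]
  exact Finset.sum_congr rfl fun c _ => Finset.sum_comm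

set_option maxHeartbeats 4000000 in
lemma aux_oneT_entry {R A B : Type} [Fintype R] [DecidableEq R] [Fintype A] [DecidableEq A]
    [Fintype B] [DecidableEq B]
    (U : Matrix (A × B) (A × B) ℂ) (Y : Matrix ((R × A) × B) ((R × A) × B) ℂ)
    (r r'' : R) (a a'' : A) (b b' : B) :
    (oneTensor U * Y * (oneTensor U)ᴴ : Matrix ((R × A) × B) ((R × A) × B) ℂ) ((r, a), b) ((r'', a''), b')
      = ∑ a1 : A, ∑ a2 : A, ∑ b1 : B, ∑ b2 : B,
          U (a, b) (a1, b1) * Y ((r, a1), b1) ((r'', a2), b2)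
            * (starRingEnd ℂ) (U (a'', b') (a2, b2)) := by
  simp only [oneTensor, Matrix.mul_apply, Matrix.conjTranspose_apply,
    Matrix.of_apply, star_mul', star_zero, star_one,
    Fintype.sum_prod_type, mul_ite, ite_mul, mul_zero, zero_mul, mul_one, one_mul,
    Finset.sum_ite_eq, Finset.sum_ite_eq', Finset.mem_univ, if_true,
    Finset.sum_ite_irrel, Finset.sum_const_zero]
  simp only [apply_ite (star : ℂ → ℂ), star_zero, mul_ite, mul_zero, Finset.sum_ite_irrel,
    Finset.sum_const_zero, Finset.sum_ite_eq, Finset.mem_univ, if_true]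
  simp only [Finset.sum_mul]
  trans ∑ a2 : A, ∑ a1 : A, ∑ b2 : B, ∑ b1 : B,
      U (a, b) (a1, b1) * Y ((r, a1), b1) ((r'', a2), b2) * star (U (a'', b') (a2, b2))
  · exact Finset.sum_congr rfl fun a2 _ => Finset.sum_comm
  trans ∑ a1 : A, ∑ a2 : A, ∑ b2 : B, ∑ b1 : B,
      U (a, b) (a1, b1) * Y ((r, a1), b1) ((r'', a2), b2) * star (U (a'', b') (a2, b2))
  · exact Finset.sum_comm
  exact Finset.sum_congr rfl fun a1 _ => Finset.sum_congr rfl fun a2 _ => Finset.sum_comm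

set_option maxHeartbeats 1000000 in
lemma aux_Fstd {R A B : Type} [Fintype R] [DecidableEq R] [Fintype A] [DecidableEq A]
    [Fintype B] [DecidableEq B]
    (σ : Matrix ((R × A) × B) ((R × A) × B) ℂ) (U : Matrix (A × B) (A × B) ℂ)
    (hcanon : ∀ ρ' : Matrix (R × A) (R × A) ℂ, IsDensity ρ' →
        ptraceL (copyW (oneTensor U) * (ρ' ⊗ₖ σ) * (copyW (oneTensor U))ᴴ) = σ)
    (p q : R × A) :
    ptraceL (copyW (oneTensor U) * (Matrix.single p q (1:ℂ) ⊗ₖ σ)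
        * (copyW (oneTensor U))ᴴ) = (if p = q then (1:ℂ) else 0) • σ := by
  set W : Matrix ((R × A) × ((R × A) × B)) ((R × A) × ((R × A) × B)) ℂ :=
    copyW (oneTensor U : Matrix ((R × A) × B) ((R × A) × B) ℂ) with hW
  by_cases hpq : p = q
  · subst hpq
    rw [if_pos rfl, one_smul]
    set e : (R × A) → ℂ := fun x => if x = p then 1 else 0 with he
    have hid : Matrix.single p p (1:ℂ) = ((1:ℝ):ℂ)⁻¹ • Matrix.vecMulVec e (star e) := by
      ext x y
      by_cases hx : x = p <;> by_cases hy : y = p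
      · simp [Matrix.single, Matrix.vecMulVec_apply, he, hx, hy]
      · simp [Matrix.single, Matrix.vecMulVec_apply, he, hx, hy,
          (show ¬ p = y from fun h => hy h.symm)]
      · simp [Matrix.single, Matrix.vecMulVec_apply, he, hx, hy,
          (show ¬ p = x from fun h => hx h.symm)]
      · simp [Matrix.single, Matrix.vecMulVec_apply, he, hx, hy,
          (show ¬ p = x from fun h => hx h.symm)]
    rw [hid]
    refine hcanon _ (aux_isDensity_vecConj e 1 one_pos ?_)
    simp [he, apply_ite (starRingEnd ℂ), Finset.sum_ite_eq']
  · rw [if_neg hpq, zero_smul]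
    set w : ℂ → (R × A) → ℂ := fun μ x =>
      (if x = p then 1 else 0) + μ * (if x = q then 1 else 0) with hw
    have htr : ∀ μ : ℂ, μ * (starRingEnd ℂ) μ = 1 →
        ∑ i, w μ i * (starRingEnd ℂ) (w μ i) = ((2:ℝ):ℂ) := by
      intro μ hμ
      simp only [hw, map_add, map_mul, apply_ite (starRingEnd ℂ), map_one, map_zero,
        add_mul, mul_add, Finset.sum_add_distrib, mul_ite, ite_mul, one_mul, mul_one,
        zero_mul, mul_zero, Finset.sum_ite_eq', Finset.mem_univ, if_true, hpq]
      rw [hμ]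
      norm_num [(show ¬ q = p from fun h => hpq h.symm)]
    set M : ℂ → Matrix (R × A) (R × A) ℂ :=
      fun μ => ((2:ℝ):ℂ)⁻¹ • Matrix.vecMulVec (w μ) (star (w μ)) with hM
    have hF : ∀ μ : ℂ, μ * (starRingEnd ℂ) μ = 1 →
        ptraceL (W * ((M μ) ⊗ₖ σ) * Wᴴ) = σ := fun μ hμ =>
      hcanon _ (aux_isDensity_vecConj (w μ) 2 two_pos (htr μ hμ))
    set ep : (R × A) → ℂ := fun x => if x = p then 1 else 0 with hep
    set eQ : (R × A) → ℂ := fun x => if x = q then 1 else 0 with heQ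
    have hexp : ∀ μ : ℂ, μ * (starRingEnd ℂ) μ = 1 →
        Matrix.vecMulVec (w μ) (star (w μ))
          = Matrix.vecMulVec ep (star ep) + ((starRingEnd ℂ) μ) • Matrix.vecMulVec ep (star eQ)
            + μ • Matrix.vecMulVec eQ (star ep) + Matrix.vecMulVec eQ (star eQ) := by
      intro μ hμ
      ext x y
      simp only [hw, hep, heQ, Matrix.vecMulVec_apply, Matrix.add_apply, Matrix.smul_apply,
        Pi.star_apply, smul_eq_mul, Complex.star_def, map_add, map_mul,
        apply_ite (starRingEnd ℂ), map_one, map_zero]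
      linear_combination ((if x = q then (1:ℂ) else 0) * (if y = q then (1:ℂ) else 0)) * hμ
    have hstd : Matrix.single p q (1:ℂ) = Matrix.vecMulVec ep (star eQ) := by
      ext x y
      by_cases hx : x = p <;> by_cases hy : y = q
      · simp [Matrix.single, Matrix.vecMulVec_apply, hep, heQ, hx, hy]
      · simp [Matrix.single, Matrix.vecMulVec_apply, hep, heQ, hx, hy,
          (show ¬ q = y from fun h => hy h.symm)]
      · simp [Matrix.single, Matrix.vecMulVec_apply, hep, heQ, hx, hy,
          (show ¬ p = x from fun h => hx h.symm)]
      · simp [Matrix.single, Matrix.vecMulVec_apply, hep, heQ, hx, hy,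
          (show ¬ p = x from fun h => hx h.symm)]
    have hdec : Matrix.single p q (1:ℂ)
        = (2⁻¹ : ℂ) • M 1 + (Complex.I * 2⁻¹) • M Complex.I
          + (-2⁻¹ : ℂ) • M (-1) + (-Complex.I * 2⁻¹) • M (-Complex.I) := by
      rw [hstd]
      simp only [hM, hexp 1 (by norm_num), hexp Complex.I (by simp [Complex.conj_I]),
        hexp (-1) (by norm_num), hexp (-Complex.I) (by simp [Complex.conj_I]),
        map_one, map_neg, Complex.conj_I, Complex.ofReal_ofNat]
      match_scalars <;> (ring_nf; try simp [Complex.I_sq]) <;> (try ring_nf) <;> (try norm_num [Complex.ext_iff])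
    rw [hdec]
    simp only [Matrix.add_kronecker, Matrix.smul_kronecker, Matrix.add_mul, Matrix.mul_add,
      Matrix.smul_mul, Matrix.mul_smul, aux_ptraceL_add, aux_ptraceL_smul]
    rw [hF 1 (by norm_num), hF Complex.I (by simp [Complex.conj_I]),
      hF (-1) (by norm_num), hF (-Complex.I) (by simp [Complex.conj_I])]
    rw [← add_smul, ← add_smul, ← add_smul]
    convert zero_smul ℂ σ using 2
    ring

lemma aux_key {R A B : Type} [Fintype R] [DecidableEq R] [Fintype A] [DecidableEq A]
    [Fintype B] [DecidableEq B]
    (σ : Matrix ((R × A) × B) ((R × A) × B) ℂ) (U : Matrix (A × B) (A × B) ℂ)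
    (hcanon : ∀ ρ' : Matrix (R × A) (R × A) ℂ, IsDensity ρ' →
        ptraceL (copyW (oneTensor U) * (ρ' ⊗ₖ σ) * (copyW (oneTensor U))ᴴ) = σ)
    (s0 : R) (c1 c2 : A) (r r' : R) (a a' : A) (b b' : B) :
    ∑ c : A, ∑ b1 : B, ∑ b2 : B,
        U (c, b) (c1, b1) * σ ((r, a), b1) ((r', a'), b2)
          * (starRingEnd ℂ) (U (c, b') (c2, b2))
      = (if c1 = c2 then (1:ℂ) else 0) * σ ((r, a), b) ((r', a'), b') := by
  have h := aux_Fstd σ U hcanon (s0, c1) (s0, c2)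
  calc ∑ c : A, ∑ b1 : B, ∑ b2 : B,
        U (c, b) (c1, b1) * σ ((r, a), b1) ((r', a'), b2)
          * (starRingEnd ℂ) (U (c, b') (c2, b2))
      = ptraceL (copyW (oneTensor U) * (Matrix.single (s0, c1) (s0, c2) (1:ℂ) ⊗ₖ σ)
          * (copyW (oneTensor U))ᴴ) ((r, a), b) ((r', a'), b') :=
        (aux_Fstd_entry σ U s0 c1 c2 r r' a a' b b').symm
    _ = ((if (s0, c1) = (s0, c2) then (1:ℂ) else 0) • σ) ((r, a), b) ((r', a'), b') := by
        rw [h]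
    _ = (if c1 = c2 then (1:ℂ) else 0) * σ ((r, a), b) ((r', a'), b') := by
        simp [Matrix.smul_apply, Prod.ext_iff, smul_eq_mul]

lemma aux_extendMid_expand {R A B : Type} [Fintype R] [Fintype A] [DecidableEq A] [Fintype B]
    (L : Matrix A A ℂ →ₗ[ℂ] Matrix A A ℂ) (σ : Matrix ((R × A) × B) ((R × A) × B) ℂ) :
    extendMid L σ = ∑ c1 : A, ∑ c2 : A,
      (Matrix.of fun p q => σ ((p.1.1, c1), p.2) ((q.1.1, c2), q.2)
        * (L (Matrix.single c1 c2 (1:ℂ))) p.1.2 q.1.2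
        : Matrix ((R × A) × B) ((R × A) × B) ℂ) := by
  ext p q
  simp only [extendMid, Matrix.of_apply, Matrix.sum_apply]
  have hM : (Matrix.of fun a a' => σ ((p.1.1, a), p.2) ((q.1.1, a'), q.2) : Matrix A A ℂ)
      = ∑ c1 : A, ∑ c2 : A,
        σ ((p.1.1, c1), p.2) ((q.1.1, c2), q.2) • Matrix.single c1 c2 (1:ℂ) := by
    conv_lhs => rw [Matrix.matrix_eq_sum_single
      (Matrix.of fun a a' => σ ((p.1.1, a), p.2) ((q.1.1, a'), q.2) : Matrix A A ℂ)]
    refine Finset.sum_congr rfl fun c1 _ => Finset.sum_congr rfl fun c2 _ => ?_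
    rw [Matrix.smul_single, smul_eq_mul, mul_one]
    rfl
  rw [hM, map_sum]
  simp only [Matrix.sum_apply, map_sum, map_smul, Matrix.smul_apply, smul_eq_mul]

lemma aux_core {R A B : Type} [Fintype R] [DecidableEq R] [Fintype A] [DecidableEq A]
    [Fintype B] [DecidableEq B]
    (σ : Matrix ((R × A) × B) ((R × A) × B) ℂ) (U : Matrix (A × B) (A × B) ℂ)
    (hcanon : ∀ ρ' : Matrix (R × A) (R × A) ℂ, IsDensity ρ' →
        ptraceL (copyW (oneTensor U) * (ρ' ⊗ₖ σ) * (copyW (oneTensor U))ᴴ) = σ)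
    (s0 : R) (G : Matrix A A ℂ) (c1 c2 : A) :
    ptraceMid (oneTensor U * (Matrix.of fun p q => σ ((p.1.1, c1), p.2) ((q.1.1, c2), q.2)
          * G p.1.2 q.1.2 : Matrix ((R × A) × B) ((R × A) × B) ℂ) * (oneTensor U)ᴴ)
      = ptraceMid (Matrix.of fun p q => σ ((p.1.1, c1), p.2) ((q.1.1, c2), q.2)
          * G p.1.2 q.1.2 : Matrix ((R × A) × B) ((R × A) × B) ℂ) := by
  set Y : Matrix ((R × A) × B) ((R × A) × B) ℂ :=
    Matrix.of fun p q => σ ((p.1.1, c1), p.2) ((q.1.1, c2), q.2) * G p.1.2 q.1.2 with hY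
  ext pq qq
  obtain ⟨r, b⟩ := pq
  obtain ⟨r', b'⟩ := qq
  simp only [ptraceMid, Matrix.of_apply]
  calc ∑ a : A, (oneTensor U * Y * (oneTensor U)ᴴ : Matrix ((R × A) × B) ((R × A) × B) ℂ) ((r, a), b) ((r', a), b')
      = ∑ a : A, ∑ a1 : A, ∑ a2 : A, ∑ b1 : B, ∑ b2 : B,
          U (a, b) (a1, b1) * (σ ((r, c1), b1) ((r', c2), b2) * G a1 a2)
            * (starRingEnd ℂ) (U (a, b') (a2, b2)) := by
        refine Finset.sum_congr rfl fun a _ => ?_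
        rw [aux_oneT_entry]
        rfl
    _ = ∑ a1 : A, ∑ a2 : A, G a1 a2 * ∑ a : A, ∑ b1 : B, ∑ b2 : B,
          U (a, b) (a1, b1) * σ ((r, c1), b1) ((r', c2), b2)
            * (starRingEnd ℂ) (U (a, b') (a2, b2)) := by
        rw [Finset.sum_comm]
        refine Finset.sum_congr rfl fun a1 _ => ?_
        rw [Finset.sum_comm]
        refine Finset.sum_congr rfl fun a2 _ => ?_
        rw [Finset.mul_sum]
        refine Finset.sum_congr rfl fun a _ => ?_
        rw [Finset.mul_sum]
        refine Finset.sum_congr rfl fun b1 _ => ?_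
        rw [Finset.mul_sum]
        refine Finset.sum_congr rfl fun b2 _ => ?_
        ring
    _ = ∑ a1 : A, ∑ a2 : A, G a1 a2
          * ((if a1 = a2 then (1:ℂ) else 0) * σ ((r, c1), b) ((r', c2), b')) := by
        refine Finset.sum_congr rfl fun a1 _ => Finset.sum_congr rfl fun a2 _ => ?_
        rw [aux_key σ U hcanon s0 a1 a2 r r' c1 c2 b b']
    _ = ∑ a : A, Y ((r, a), b) ((r', a), b') := by
        simp [hY, mul_ite, ite_mul, mul_zero, zero_mul, Finset.sum_ite_eq',
          mul_comm]


/-- if `1_R ⊗ U` utilizes only the semantic information of `B` in the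
tripartite state `σ_RAB` (canonical compatibility on `B`, local unitary `V = 1`), then
for every linear map `L` on operators on `A`,
`Tr_A[(1_R ⊗ U)((id_R ⊗ L ⊗ id_B)(σ))(1_R ⊗ U)†] = Tr_A[(id_R ⊗ L ⊗ id_B)(σ)]`;
in particular `Tr_A[(1_R ⊗ U) σ (1_R ⊗ U)†] = σ_RB`. -/
theorem stmt_12 {R A B : Type} [Fintype R] [DecidableEq R] [Fintype A] [DecidableEq A]
    [Fintype B] [DecidableEq B]
    (σ : Matrix ((R × A) × B) ((R × A) × B) ℂ) (hσ : IsDensity σ)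
    (U : Matrix (A × B) (A × B) ℂ) (hU : IsUnitaryMat U)
    (hcanon : ∀ ρ' : Matrix (R × A) (R × A) ℂ, IsDensity ρ' →
        ptraceL (copyW (oneTensor U) * (ρ' ⊗ₖ σ) * (copyW (oneTensor U))ᴴ) = σ) :
    (∀ L : Matrix A A ℂ →ₗ[ℂ] Matrix A A ℂ,
        ptraceMid (oneTensor U * extendMid L σ * (oneTensor U)ᴴ)
          = ptraceMid (extendMid L σ))
    ∧ ptraceMid (oneTensor U * σ * (oneTensor U)ᴴ) = ptraceMid σ := by
  have main : ∀ L : Matrix A A ℂ →ₗ[ℂ] Matrix A A ℂ,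
      ptraceMid (oneTensor U * extendMid L σ * (oneTensor U)ᴴ)
        = ptraceMid (extendMid L σ) := by
    intro L
    cases isEmpty_or_nonempty R with
    | inl h => ext p q; exact (h.elim p.1)
    | inr h =>
      obtain ⟨s0⟩ := h
      rw [aux_extendMid_expand L σ]
      simp only [Matrix.mul_sum, Matrix.sum_mul, aux_ptraceMid_sum]
      exact Finset.sum_congr rfl fun c1 _ => Finset.sum_congr rfl fun c2 _ =>
        aux_core σ U hcanon s0 _ c1 c2
  refine ⟨main, ?_⟩
  have h2 := main LinearMap.id
  have hid : extendMid (LinearMap.id : Matrix A A ℂ →ₗ[ℂ] Matrix A A ℂ) σ = σ := by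
    ext p q
    simp [extendMid]
  rwa [hid] at h2
end

section
/- (No-stealth theorem, static form.) Let A, A' be systems with |A|·|A'| ≥ 2 and B, B' systems with |B'| = |B|, and let φ⁺_{BB'} be the maximally entangled state on B⊗B'. There do not exist unitaries U0 on A⊗B and U1 on A'⊗B' together with density matrices η on A⊗A' and ζ on B⊗B' such that for every density matrix ρ on A⊗A': Tr_{BB'}[(U0⊗U1)(ρ⊗φ⁺_{BB'})(U0⊗U1)†] = η and Tr_{AA'}[(U0⊗U1)(ρ⊗φ⁺_{BB'})(U0⊗U1)†] = ζ. Consequently, a quantum operation cannot be hidden in the correlation between two parties by unitary pre- and post-processing without using randomness. -/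
open scoped Matrix Kronecker ComplexOrder Classical

noncomputable section NoStealthAux

/-- Outer product `|x⟩⟨y|` of two vectors. -/
def outerV {n : Type*} (x y : n → ℂ) : Matrix n n ℂ :=
  Matrix.of fun i j => x i * (starRingEnd ℂ) (y j)

lemma mul_outerV_mul {n : Type*} [Fintype n] (W : Matrix n n ℂ) (x y : n → ℂ) :
    W * outerV x y * Wᴴ = outerV (W *ᵥ x) (W *ᵥ y) := by
  ext p q
  simp only [Matrix.mul_apply, outerV, Matrix.of_apply, Matrix.conjTranspose_apply,
    Matrix.mulVec, dotProduct, map_sum, map_mul, Finset.sum_mul, Finset.mul_sum]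
  refine Finset.sum_congr rfl fun r _ => Finset.sum_congr rfl fun r' _ => ?_
  simp [Complex.star_def]
  ring

lemma outerV_kron {α β : Type*} (s t : α → ℂ) (x y : β → ℂ) :
    (outerV s t) ⊗ₖ (outerV x y)
      = outerV (fun p : α × β => s p.1 * x p.2) (fun p : α × β => t p.1 * y p.2) := by
  ext ⟨a, b⟩ ⟨a', b'⟩
  simp [outerV, Matrix.kroneckerMap_apply, map_mul]
  ring

/-- The vector whose outer square is `maxEnt`. -/
def mePhi (B : Type*) [Fintype B] [DecidableEq B] : B × B → ℂ :=
  fun p => if p.1 = p.2 then ((Real.sqrt (Fintype.card B) : ℝ) : ℂ)⁻¹ else 0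

lemma maxEnt_eq_outerV (B : Type*) [Fintype B] [DecidableEq B] [Nonempty B] :
    maxEnt B = outerV (mePhi B) (mePhi B) := by
  ext p q
  simp only [maxEnt, outerV, mePhi, Matrix.of_apply]
  by_cases h1 : p.1 = p.2 <;> by_cases h2 : q.1 = q.2 <;>
    simp [h1, h2, map_inv₀, Complex.conj_ofReal]
  rw [← mul_inv, ← Complex.ofReal_mul, Real.mul_self_sqrt (by positivity)]
  norm_num

def matOf {α β : Type*} (u : α × β → ℂ) : Matrix α β ℂ :=
  Matrix.of fun a b => u (a, b)

lemma ptraceR_outerV {α β : Type*} [Fintype β] (u v : α × β → ℂ) :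
    ptraceR (outerV u v) = matOf u * (matOf v)ᴴ := by
  ext a a'
  simp [ptraceR, outerV, matOf, Matrix.mul_apply, Matrix.conjTranspose_apply, Complex.star_def]

lemma ptraceL_outerV {α β : Type*} [Fintype α] (u v : α × β → ℂ) :
    ptraceL (outerV u v) = (matOf u)ᵀ * (matOf v).map (starRingEnd ℂ) := by
  ext b b'
  simp [ptraceL, outerV, matOf, Matrix.mul_apply]

lemma isDensity_outerV' {n : Type*} [Fintype n] (w : n → ℂ)
    (hw : ∑ i, w i * (starRingEnd ℂ) (w i) = 1) : IsDensity (outerV w w) := by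
  constructor
  · have : outerV w w = (Matrix.of fun (_ : Unit) i => (starRingEnd ℂ) (w i))ᴴ *
        (Matrix.of fun (_ : Unit) i => (starRingEnd ℂ) (w i)) := by
      ext i j
      simp [outerV, Matrix.mul_apply, Matrix.conjTranspose_apply, Complex.star_def, mul_comm]
    rw [this]
    exact Matrix.posSemidef_conjTranspose_mul_self _
  · simpa [Matrix.trace, Matrix.diag, outerV] using hw

lemma ptraceL_outerV_expand {α β : Type*} [Fintype α] (a b : ℂ) (u v : α × β → ℂ) :
    ptraceL (outerV (a • u + b • v) (a • u + b • v))
      = (a * (starRingEnd ℂ) a) • ptraceL (outerV u u)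
      + (a * (starRingEnd ℂ) b) • ptraceL (outerV u v)
      + (b * (starRingEnd ℂ) a) • ptraceL (outerV v u)
      + (b * (starRingEnd ℂ) b) • ptraceL (outerV v v) := by
  ext b1 b2
  simp only [ptraceL, outerV, Matrix.of_apply, Matrix.add_apply, Matrix.smul_apply,
    Pi.add_apply, Pi.smul_apply, smul_eq_mul, map_add, map_mul]
  rw [Finset.mul_sum, Finset.mul_sum, Finset.mul_sum, Finset.mul_sum,
    ← Finset.sum_add_distrib, ← Finset.sum_add_distrib, ← Finset.sum_add_distrib]
  exact Finset.sum_congr rfl fun r _ => by ring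

end NoStealthAux

/-- no-stealth theorem, static form: there are no unitaries `U0`, `U1`
and fixed states `η`, `ζ` such that both marginals of
`(U0 ⊗ U1)(ρ ⊗ φ⁺_{BB'})(U0 ⊗ U1)†` are constant (equal to `η` and `ζ`) for every
density matrix `ρ` on `A ⊗ A'` with `|A|·|A'| ≥ 2`. -/
theorem stmt_16 {A A' B : Type} [Fintype A] [DecidableEq A] [Fintype A'] [DecidableEq A']
    [Fintype B] [DecidableEq B] [Nonempty B]
    (hcard : 2 ≤ Fintype.card A * Fintype.card A') :
    ¬ ∃ (U0 : Matrix (A × B) (A × B) ℂ) (U1 : Matrix (A' × B) (A' × B) ℂ)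
        (η : Matrix (A × A') (A × A') ℂ) (ζ : Matrix (B × B) (B × B) ℂ),
        IsUnitaryMat U0 ∧ IsUnitaryMat U1 ∧ IsDensity η ∧ IsDensity ζ ∧
        ∀ ρ : Matrix (A × A') (A × A') ℂ, IsDensity ρ →
          ptraceR (delocW U0 U1 * (ρ ⊗ₖ maxEnt B) * (delocW U0 U1)ᴴ) = η ∧
          ptraceL (delocW U0 U1 * (ρ ⊗ₖ maxEnt B) * (delocW U0 U1)ᴴ) = ζ := by
  rintro ⟨U0, U1, η, ζ, hU0, hU1, hη, hζ, h⟩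
  obtain ⟨x₀, y₀, hxy⟩ : ∃ a b : A × A', a ≠ b := by
    apply Fintype.exists_pair_of_one_lt_card
    rw [Fintype.card_prod]; omega
  set W := delocW U0 U1 with hWdef
  set ex : A × A' → ℂ := fun i => if i = x₀ then 1 else 0 with hex
  set ey : A × A' → ℂ := fun i => if i = y₀ then 1 else 0 with hey
  have hsum : ∀ α β : ℂ,
      ∑ i, (α • ex + β • ey) i * (starRingEnd ℂ) ((α • ex + β • ey) i)
        = α * (starRingEnd ℂ) α + β * (starRingEnd ℂ) β := by
    intro α β
    have hterm : ∀ i, (α • ex + β • ey) i * (starRingEnd ℂ) ((α • ex + β • ey) i)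
        = (if i = x₀ then α * (starRingEnd ℂ) α else 0)
          + (if i = y₀ then β * (starRingEnd ℂ) β else 0) := by
      intro i
      by_cases h1 : i = x₀ <;> by_cases h2 : i = y₀
      · subst h1; exact absurd h2 hxy
      · simp [hex, hey, h1, h2, hxy, Ne.symm hxy]
      · simp [hex, hey, h1, h2, hxy, Ne.symm hxy]
      · simp [hex, hey, h1, h2, hxy, Ne.symm hxy]
    rw [Finset.sum_congr rfl fun i _ => hterm i, Finset.sum_add_distrib,
      Finset.sum_ite_eq' Finset.univ x₀, Finset.sum_ite_eq' Finset.univ y₀]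
    simp
  have key : ∀ s t : (A × A') → ℂ,
      W * ((outerV s t) ⊗ₖ maxEnt B) * Wᴴ
        = outerV (W *ᵥ fun r : (A × A') × (B × B) => s r.1 * mePhi B r.2)
            (W *ᵥ fun r : (A × A') × (B × B) => t r.1 * mePhi B r.2) := by
    intro s t
    rw [maxEnt_eq_outerV, outerV_kron, mul_outerV_mul]
  set uu := W *ᵥ (fun r : (A × A') × (B × B) => ex r.1 * mePhi B r.2) with huu
  set vv := W *ᵥ (fun r : (A × A') × (B × B) => ey r.1 * mePhi B r.2) with hvv
  have hlin : ∀ α β : ℂ,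
      (W *ᵥ fun r : (A × A') × (B × B) => (α • ex + β • ey) r.1 * mePhi B r.2)
        = α • uu + β • vv := by
    intro α β
    have hv : (fun r : (A × A') × (B × B) => (α • ex + β • ey) r.1 * mePhi B r.2)
        = α • (fun r : (A × A') × (B × B) => ex r.1 * mePhi B r.2)
          + β • (fun r : (A × A') × (B × B) => ey r.1 * mePhi B r.2) := by
      funext r
      simp only [Pi.add_apply, Pi.smul_apply, smul_eq_mul]
      ring
    rw [hv, Matrix.mulVec_add, Matrix.mulVec_smul, Matrix.mulVec_smul, huu, hvv]
  have happ : ∀ α β : ℂ, α * (starRingEnd ℂ) α + β * (starRingEnd ℂ) β = 1 →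
      ptraceR (outerV (α • uu + β • vv) (α • uu + β • vv)) = η ∧
      ptraceL (outerV (α • uu + β • vv) (α • uu + β • vv)) = ζ := by
    intro α β h1
    have hd : IsDensity (outerV (α • ex + β • ey) (α • ex + β • ey)) :=
      isDensity_outerV' _ (by rw [hsum α β, h1])
    have hh := h _ hd
    rwa [key, hlin] at hh
  obtain ⟨hη1, hζ1⟩ := happ 1 0 (by simp)
  obtain ⟨hη2, hζ2⟩ := happ 0 1 (by simp)
  simp only [one_smul, zero_smul, add_zero, zero_add] at hη1 hζ1 hη2 hζ2
  set c : ℂ := ((Real.sqrt 2 : ℝ) : ℂ)⁻¹ with hcdef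
  have hc : c * (starRingEnd ℂ) c = 2⁻¹ := by
    rw [hcdef, map_inv₀, Complex.conj_ofReal, ← mul_inv, ← Complex.ofReal_mul,
      Real.mul_self_sqrt (by norm_num : (0:ℝ) ≤ 2)]
    norm_num
  have hcI : (c * Complex.I) * (starRingEnd ℂ) (c * Complex.I) = 2⁻¹ := by
    rw [map_mul, Complex.conj_I,
      show c * Complex.I * ((starRingEnd ℂ) c * -Complex.I)
        = (c * (starRingEnd ℂ) c) * -(Complex.I * Complex.I) from by ring,
      hc, Complex.I_mul_I]
    norm_num
  obtain ⟨-, hζ3⟩ := happ c c (by rw [hc]; norm_num)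
  obtain ⟨-, hζ4⟩ := happ c (c * Complex.I) (by rw [hc, hcI]; norm_num)
  have s2 : c * (starRingEnd ℂ) (c * Complex.I) = 2⁻¹ * -Complex.I := by
    rw [map_mul, Complex.conj_I,
      show c * ((starRingEnd ℂ) c * -Complex.I) = (c * (starRingEnd ℂ) c) * -Complex.I from
        by ring, hc]
  have s3 : (c * Complex.I) * (starRingEnd ℂ) c = 2⁻¹ * Complex.I := by
    rw [show c * Complex.I * (starRingEnd ℂ) c = (c * (starRingEnd ℂ) c) * Complex.I from
      by ring, hc]
  rw [ptraceL_outerV_expand, hc, hζ1, hζ2] at hζ3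
  rw [ptraceL_outerV_expand, hc, s2, s3, hcI, hζ1, hζ2] at hζ4
  have hX : ptraceL (outerV uu vv) = 0 := by
    ext b b'
    have e3 := Matrix.ext_iff.mpr hζ3 b b'
    have e4 := Matrix.ext_iff.mpr hζ4 b b'
    simp only [Matrix.add_apply, Matrix.smul_apply, smul_eq_mul, Matrix.zero_apply] at e3 e4 ⊢
    have g1 : ptraceL (outerV uu vv) b b' + ptraceL (outerV vv uu) b b' = 0 := by
      linear_combination (2:ℂ) * e3
    have g2 : Complex.I * ptraceL (outerV vv uu) b b'
        - Complex.I * ptraceL (outerV uu vv) b b' = 0 := by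
      linear_combination (2:ℂ) * e4
    have g3 : (2 * Complex.I) * ptraceL (outerV uu vv) b b' = 0 := by
      linear_combination Complex.I * g1 - g2
    rcases mul_eq_zero.mp g3 with hb | hb
    · exact absurd hb (by simp [Complex.I_ne_zero])
    · exact hb
  rw [ptraceL_outerV] at hX
  have hMN : (matOf uu)ᴴ * matOf vv = 0 := by
    ext b b'
    have hx := Matrix.ext_iff.mpr hX b b'
    simp only [Matrix.mul_apply, Matrix.transpose_apply, Matrix.map_apply,
      Matrix.zero_apply] at hx ⊢
    have hterm : ∀ a, (matOf uu)ᴴ b a * matOf vv a b'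
        = (starRingEnd ℂ) (matOf uu a b * (starRingEnd ℂ) (matOf vv a b')) := by
      intro a
      simp [Matrix.conjTranspose_apply, Complex.star_def, map_mul]
    rw [Finset.sum_congr rfl fun a _ => hterm a, ← map_sum, hx, map_zero]
  have hMM : matOf uu * (matOf uu)ᴴ = η := by rw [← ptraceR_outerV]; exact hη1
  have hNN : matOf vv * (matOf vv)ᴴ = η := by rw [← ptraceR_outerV]; exact hη2
  have hsq : η * η = 0 := by
    have hee : η * η = (matOf uu * (matOf uu)ᴴ) * (matOf vv * (matOf vv)ᴴ) := by
      rw [hMM, hNN]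
    rw [hee, Matrix.mul_assoc, ← Matrix.mul_assoc ((matOf uu)ᴴ), hMN,
      Matrix.zero_mul, Matrix.mul_zero]
  have hherm : ηᴴ = η := hη.1.1
  have hzero : η = 0 := by
    ext p q
    have h0 : (η * η) p p = 0 := by rw [hsq]; simp
    rw [Matrix.mul_apply] at h0
    have hterm : ∀ j, η p j * η j p = (Complex.normSq (η p j) : ℂ) := by
      intro j
      have hjp : η j p = (starRingEnd ℂ) (η p j) := by
        have h' := Matrix.ext_iff.mpr hherm j p
        simpa [Matrix.conjTranspose_apply, Complex.star_def] using h'.symm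
      rw [hjp, Complex.mul_conj]
    rw [Finset.sum_congr rfl fun j _ => hterm j] at h0
    have h1 : ∑ j, Complex.normSq (η p j) = 0 := by exact_mod_cast h0
    have h2 := (Finset.sum_eq_zero_iff_of_nonneg
      (fun j _ => Complex.normSq_nonneg _)).mp h1 q (Finset.mem_univ q)
    simpa using Complex.normSq_eq_zero.mp h2
  have htr := hη.2
  rw [hzero, Matrix.trace_zero] at htr
  exact zero_ne_one htr
end
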